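/- arXiv:1611.08752 — 5 statements merged into one kernel-verified Lean document; each statement's English description precedes it below -/
import Mathlib

section
/- Let n ≥ 16, let v_1, …, v_m ∈ ℝ^n be unit vectors, let x⁰ ∈ [-1,1]^n, and let λ_1 ≥ λ_2 ≥ … ≥ λ_m ≥ 0 be real parameters satisfying ∑_{i=1}^m exp(-λ_i²/16) ≤ n/32. Then there exists a point x ∈ [-1,1]^n such that ⟨v_i, x - x⁰⟩ ≤ 11·λ_i for every i ∈ {1,…,m} and at least n/2 of the coordinates of x lie in {-1, 1}. -/
set_option maxHeartbeats 1000000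

open Real Finset

noncomputable section
namespace DPC

/-- `exp z ≤ 1 + z + z^2` for `|z| ≤ 1`. -/
lemma exp_quad {z : ℝ} (hz : |z| ≤ 1) : Real.exp z ≤ 1 + z + z ^ 2 := by
  have h := Real.exp_bound hz (n := 2) (by norm_num)
  have h2 : ∑ i ∈ range 2, z ^ i / (Nat.factorial i : ℝ) = 1 + z := by
    simp [Finset.sum_range_succ]
  rw [h2] at h
  norm_num [Nat.factorial] at h
  have h3 : Real.exp z - (1 + z) ≤ z ^ 2 * (3 / 4) := le_trans (le_abs_self _) h
  nlinarith [sq_nonneg z]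

/-- Two-point averaged exponential bound (martingale step MGF bound). -/
lemma two_point {z tp tm g : ℝ} (htp : 0 < tp) (htm : 0 < tm) (h1 : tp ≤ g) (h2 : tm ≤ g)
    (hz : |z| * g ≤ 1) :
    tm / (tp + tm) * Real.exp (tp * z) + tp / (tp + tm) * Real.exp (-(tm * z))
      ≤ Real.exp (g ^ 2 * z ^ 2) := by
  have hg : 0 < g := lt_of_lt_of_le htp h1
  have hzg : |z| ≤ 1 / g := by rw [le_div_iff₀ hg]; linarith [hz]
  have habs1 : |tp * z| ≤ 1 := by
    rw [abs_mul, abs_of_pos htp]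
    calc tp * |z| ≤ g * |z| := by nlinarith [abs_nonneg z]
    _ = |z| * g := mul_comm _ _
    _ ≤ 1 := hz
  have habs2 : |-(tm * z)| ≤ 1 := by
    rw [abs_neg, abs_mul, abs_of_pos htm]
    calc tm * |z| ≤ g * |z| := by nlinarith [abs_nonneg z]
    _ = |z| * g := mul_comm _ _
    _ ≤ 1 := hz
  have e1 := exp_quad habs1
  have e2 := exp_quad habs2
  have hsumpos : 0 < tp + tm := by linarith
  have key : tm / (tp + tm) * (1 + tp * z + (tp * z) ^ 2)
      + tp / (tp + tm) * (1 + -(tm * z) + (-(tm * z)) ^ 2) = 1 + (tp * tm) * z ^ 2 := by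
    field_simp
    ring
  have hle : tm / (tp + tm) * Real.exp (tp * z) + tp / (tp + tm) * Real.exp (-(tm * z))
      ≤ 1 + (tp * tm) * z ^ 2 := by
    rw [← key]
    have p1 : (0:ℝ) ≤ tm / (tp + tm) := by positivity
    have p2 : (0:ℝ) ≤ tp / (tp + tm) := by positivity
    exact add_le_add (mul_le_mul_of_nonneg_left e1 p1) (mul_le_mul_of_nonneg_left e2 p2)
  calc tm / (tp + tm) * Real.exp (tp * z) + tp / (tp + tm) * Real.exp (-(tm * z))
      ≤ 1 + (tp * tm) * z ^ 2 := hle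
  _ ≤ 1 + g ^ 2 * z ^ 2 := by
      have hm : tp * tm ≤ g * g := mul_le_mul h1 h2 (le_of_lt htm) (le_of_lt hg)
      nlinarith [sq_nonneg z]
  _ ≤ Real.exp (g ^ 2 * z ^ 2) := by
      have := Real.add_one_le_exp (g ^ 2 * z ^ 2); linarith

variable {n m : ℕ}

/-- squared norm in Euclidean space -/
lemma norm_sq_eq (x : EuclideanSpace ℝ (Fin n)) : ‖x‖ ^ 2 = ∑ j, (x j) ^ 2 := by
  rw [EuclideanSpace.norm_eq, Real.sq_sqrt (by positivity)]
  congr 1; ext j; rw [Real.norm_eq_abs, sq_abs]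

lemma norm_sq_le_n {x : EuclideanSpace ℝ (Fin n)} (hx : ∀ j, -1 ≤ x j ∧ x j ≤ 1) :
    ‖x‖ ^ 2 ≤ (n : ℝ) := by
  rw [norm_sq_eq]
  calc ∑ j, (x j) ^ 2 ≤ ∑ _j : Fin n, (1:ℝ) := by
        apply Finset.sum_le_sum; intro j _
        have := (hx j).1; have := (hx j).2; nlinarith
  _ = n := by simp



open scoped Classical

variable (v : Fin m → EuclideanSpace ℝ (Fin n)) (x0 : EuclideanSpace ℝ (Fin n))
  (lam : Fin m → ℝ)

/-- the kept constraints (the rest are satisfied automatically inside the cube) -/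
def K : Finset (Fin m) := Finset.univ.filter (fun i => 121 * (lam i) ^ 2 ≤ 4 * n)

/-- current value of constraint `i` -/
def Xv (x : EuclideanSpace ℝ (Fin n)) (i : Fin m) : ℝ := inner ℝ (v i) (x - x0)

/-- exponential tilt parameter for constraint `i` -/
def sp (i : Fin m) : ℝ := 11 * lam i / 36

/-- barrier potential term for constraint `i` -/
def Yp (x : EuclideanSpace ℝ (Fin n)) (sg : Fin m → ℝ) (i : Fin m) : ℝ :=
  Real.exp (-(lam i) ^ 2 / 16 + sp lam i * Xv v x0 x i - (sp lam i) ^ 2 * sg i)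

/-- barrier potential -/
def Phi (x : EuclideanSpace ℝ (Fin n)) (sg : Fin m → ℝ) : ℝ :=
  ∑ i ∈ K (n := n) lam, Yp v x0 lam x sg i

/-- variance potential -/
def Xi (sg : Fin m → ℝ) : ℝ := ∑ i ∈ K (n := n) lam, Real.exp (n * sg i)

/-- combined walk potential -/
def MM (x : EuclideanSpace ℝ (Fin n)) (sg : Fin m → ℝ) (C : ℕ) : ℝ :=
  Phi v x0 lam x sg + (1 / 32) * ((C : ℝ) / n - ‖x‖ ^ 2)

/-- step size -/
def gam (n : ℕ) : ℝ := 1 / Real.sqrt n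

/-- The invariant maintained by the walk. -/
structure Inv (x : EuclideanSpace ℝ (Fin n)) (F : Finset (Fin n)) (B : Finset (Fin m))
    (sg : Fin m → ℝ) (C : ℕ) : Prop where
  cube : ∀ j, -1 ≤ x j ∧ x j ≤ 1
  tightF : ∀ j ∈ F, x j = 1 ∨ x j = -1
  strictF : ∀ j ∉ F, -1 < x j ∧ x j < 1
  feas : ∀ i ∈ K (n := n) lam, Xv v x0 x i ≤ 11 * lam i
  strictB : ∀ i ∈ K (n := n) lam, i ∉ B → Xv v x0 x i < 11 * lam i
  BsubK : B ⊆ K (n := n) lam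
  absorbed : ∀ i ∈ B, 1 ≤ Yp v x0 lam x sg i
  sgmono : ∀ i, 0 ≤ sg i
  pot : MM v x0 lam x sg C ≤ (n : ℝ) / 32
  xi : Xi (n := n) lam sg ≤ ((K (n := n) lam).card : ℝ) * (1 + 8 / n) ^ (C + F.card + B.card)



section Derived

variable {v : Fin m → EuclideanSpace ℝ (Fin n)} {x0 : EuclideanSpace ℝ (Fin n)}
  {lam : Fin m → ℝ}

lemma npos (hn : 16 ≤ n) : 0 < (n : ℝ) := by
  have : (16:ℝ) ≤ n := by exact_mod_cast hn
  linarith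

lemma gam_pos (hn : 16 ≤ n) : 0 < gam n := by
  have := npos hn
  unfold gam; positivity

lemma gam_sq (hn : 16 ≤ n) : gam n ^ 2 = 1 / n := by
  unfold gam
  rw [div_pow, one_pow, Real.sq_sqrt (le_of_lt (npos hn))]

lemma lam_mem_K {i : Fin m} (hi : i ∈ K (n := n) lam) : 121 * (lam i) ^ 2 ≤ 4 * n := by
  simpa [K] using hi

lemma lam_le_K (hn : 16 ≤ n) (hnonneg : ∀ i, 0 ≤ lam i) {i : Fin m}
    (hi : i ∈ K (n := n) lam) : 11 * lam i ≤ 2 * Real.sqrt n := by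
  have h := lam_mem_K hi
  have h2 : (11 * lam i) ^ 2 ≤ (2 * Real.sqrt n) ^ 2 := by
    have hs := Real.sq_sqrt (le_of_lt (npos (n := n) hn))
    nlinarith
  have h3 : 0 ≤ 11 * lam i := by have := hnonneg i; linarith
  calc 11 * lam i = Real.sqrt ((11 * lam i) ^ 2) := (Real.sqrt_sq h3).symm
  _ ≤ Real.sqrt ((2 * Real.sqrt n) ^ 2) := Real.sqrt_le_sqrt h2
  _ = 2 * Real.sqrt n := Real.sqrt_sq (by positivity)

lemma sp_nonneg (hnonneg : ∀ i, 0 ≤ lam i) (i : Fin m) : 0 ≤ sp lam i := by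
  have := hnonneg i; unfold sp; linarith

lemma sp_gam_le (hn : 16 ≤ n) (hnonneg : ∀ i, 0 ≤ lam i) {i : Fin m}
    (hi : i ∈ K (n := n) lam) : sp lam i * gam n ≤ 1 / 18 := by
  have h := lam_le_K hn hnonneg hi
  have hs : Real.sqrt n ≠ 0 := by
    have := npos hn
    positivity
  have : sp lam i ≤ Real.sqrt n / 18 := by
    unfold sp; linarith
  unfold gam
  rw [mul_one_div]
  rw [div_le_div_iff₀ (by positivity) (by norm_num)]
  calc sp lam i * 18 ≤ (Real.sqrt n / 18) * 18 := by
        nlinarith [Real.sqrt_nonneg (n:ℝ)]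
  _ = Real.sqrt n := by field_simp
  _ = 1 * Real.sqrt n := (one_mul _).symm

lemma Yp_pos (x : EuclideanSpace ℝ (Fin n)) (sg : Fin m → ℝ) (i : Fin m) :
    0 < Yp v x0 lam x sg i := Real.exp_pos _

lemma Phi_nonneg (x : EuclideanSpace ℝ (Fin n)) (sg : Fin m → ℝ) :
    0 ≤ Phi v x0 lam x sg :=
  Finset.sum_nonneg fun i _ => le_of_lt (Yp_pos x sg i)

variable {x : EuclideanSpace ℝ (Fin n)} {F : Finset (Fin n)} {B : Finset (Fin m)}
  {sg : Fin m → ℝ} {C : ℕ}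

lemma Phi_le (hn : 16 ≤ n) (hI : Inv v x0 lam x F B sg C) :
    Phi v x0 lam x sg + (1/32) * ((C:ℝ)/n) ≤ (n : ℝ) / 16 := by
  have hp := hI.pot
  unfold MM at hp
  have hx := norm_sq_le_n hI.cube
  linarith

lemma cardB_le (hn : 16 ≤ n) (hI : Inv v x0 lam x F B sg C) :
    (B.card : ℝ) ≤ (n : ℝ) / 16 := by
  have h1 : (B.card : ℝ) ≤ Phi v x0 lam x sg := by
    calc (B.card : ℝ) = ∑ _i ∈ B, (1:ℝ) := by simp
    _ ≤ ∑ i ∈ B, Yp v x0 lam x sg i := Finset.sum_le_sum fun i hi => hI.absorbed i hi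
    _ ≤ Phi v x0 lam x sg := Finset.sum_le_sum_of_subset_of_nonneg hI.BsubK
        (fun i _ _ => le_of_lt (Yp_pos x sg i))
  have h2 := Phi_le hn hI
  have h3 : (0:ℝ) ≤ (C:ℝ)/n := by positivity
  linarith

lemma cardC_le (hn : 16 ≤ n) (hI : Inv v x0 lam x F B sg C) :
    (C : ℝ) ≤ 2 * n ^ 2 := by
  have h2 := Phi_le hn hI
  have h0 := Phi_nonneg (v := v) (x0 := x0) (lam := lam) x sg
  have hnp := npos hn
  have h4 : (C:ℝ)/n ≤ 2 * n := by linarith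
  rw [div_le_iff₀ hnp] at h4
  nlinarith

lemma cardK_le (hn : 16 ≤ n)
    (hsum : ∑ i, Real.exp (-(lam i) ^ 2 / 16) ≤ (n : ℝ) / 32) :
    ((K (n := n) lam).card : ℝ) * Real.exp (-(n:ℝ)/484) ≤ (n : ℝ) / 32 := by
  calc ((K (n := n) lam).card : ℝ) * Real.exp (-(n:ℝ)/484)
      = ∑ _i ∈ K (n := n) lam, Real.exp (-(n:ℝ)/484) := by simp [mul_comm]
  _ ≤ ∑ i ∈ K (n := n) lam, Real.exp (-(lam i) ^ 2 / 16) := by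
      apply Finset.sum_le_sum
      intro i hi
      apply Real.exp_le_exp.2
      have := lam_mem_K hi
      linarith
  _ ≤ ∑ i, Real.exp (-(lam i) ^ 2 / 16) := by
      apply Finset.sum_le_sum_of_subset_of_nonneg (Finset.subset_univ _)
      intro i _ _; positivity
  _ ≤ (n : ℝ) / 32 := hsum

lemma sg_le_20 (hn : 16 ≤ n)
    (hsum : ∑ i, Real.exp (-(lam i) ^ 2 / 16) ≤ (n : ℝ) / 32)
    (hI : Inv v x0 lam x F B sg C) : ∀ i ∈ K (n := n) lam, sg i ≤ 20 := by
  intro i hi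
  have hnp := npos hn
  -- bound the exponent count E
  have hF : (F.card : ℝ) ≤ n := by
    exact_mod_cast Finset.card_le_card (Finset.subset_univ F) |>.trans (by simp)
  have hB := cardB_le hn hI
  have hC := cardC_le hn hI
  have hE : ((C + F.card + B.card : ℕ) : ℝ) ≤ 2 * n ^ 2 + 2 * n := by
    push_cast
    have : (16:ℝ) ≤ n := by exact_mod_cast hn
    linarith
  -- (1+8/n)^E ≤ exp(16n+16)
  have hbase : (0:ℝ) ≤ 1 + 8 / n := by positivity
  have hpow : (1 + 8 / (n:ℝ)) ^ (C + F.card + B.card) ≤ Real.exp (16 * n + 16) := by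
    calc (1 + 8 / (n:ℝ)) ^ (C + F.card + B.card)
        ≤ (Real.exp (8 / n)) ^ (C + F.card + B.card) := by
          apply pow_le_pow_left₀ hbase
          have := Real.add_one_le_exp (8 / (n:ℝ))
          linarith
    _ = Real.exp ((C + F.card + B.card : ℕ) * (8 / n)) := by
          rw [← Real.exp_nat_mul]
    _ ≤ Real.exp (16 * n + 16) := by
          apply Real.exp_le_exp.2
          have h8 : (0:ℝ) < 8 / n := by positivity
          calc ((C + F.card + B.card : ℕ) : ℝ) * (8 / n)
              ≤ (2 * n ^ 2 + 2 * n) * (8 / n) := by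
                apply mul_le_mul_of_nonneg_right hE (le_of_lt h8)
          _ = 16 * n + 16 := by field_simp; ring
  -- K.card ≤ exp(n/32)·exp(n/484)
  have hK : ((K (n := n) lam).card : ℝ) ≤ Real.exp ((n:ℝ)/32 + n/484) := by
    have h1 := cardK_le (lam := lam) hn hsum
    have h2 : ((K (n := n) lam).card : ℝ) ≤ (n/32) * Real.exp ((n:ℝ)/484) := by
      calc ((K (n := n) lam).card : ℝ)
          = ((K (n := n) lam).card : ℝ) * Real.exp (-(n:ℝ)/484) * Real.exp ((n:ℝ)/484) := by
            rw [mul_assoc, ← Real.exp_add]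
            norm_num
            rw [neg_div]
            simp
      _ ≤ (n/32) * Real.exp ((n:ℝ)/484) :=
            mul_le_mul_of_nonneg_right h1 (le_of_lt (Real.exp_pos _))
    calc ((K (n := n) lam).card : ℝ) ≤ (n/32) * Real.exp ((n:ℝ)/484) := h2
    _ ≤ Real.exp ((n:ℝ)/32) * Real.exp ((n:ℝ)/484) := by
        apply mul_le_mul_of_nonneg_right _ (le_of_lt (Real.exp_pos _))
        have := Real.add_one_le_exp ((n:ℝ)/32)
        linarith
    _ = Real.exp ((n:ℝ)/32 + n/484) := (Real.exp_add _ _).symm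
  -- combine
  have hXi : Real.exp ((n:ℝ) * sg i) ≤ Xi (n := n) lam sg := by
    unfold Xi
    apply Finset.single_le_sum (f := fun i => Real.exp ((n:ℝ) * sg i)) _ hi
    intro j _; positivity
  have hfinal : Real.exp ((n:ℝ) * sg i) ≤ Real.exp ((n:ℝ)/32 + n/484 + (16 * n + 16)) := by
    calc Real.exp ((n:ℝ) * sg i) ≤ Xi (n := n) lam sg := hXi
    _ ≤ ((K (n := n) lam).card : ℝ) * (1 + 8 / n) ^ (C + F.card + B.card) := hI.xi
    _ ≤ Real.exp ((n:ℝ)/32 + n/484) * Real.exp (16 * n + 16) := by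
        apply mul_le_mul hK hpow (by positivity) (le_of_lt (Real.exp_pos _))
    _ = Real.exp ((n:ℝ)/32 + n/484 + (16 * n + 16)) := (Real.exp_add _ _).symm
  have := Real.exp_le_exp.1 hfinal
  have h16 : (16:ℝ) ≤ n := by exact_mod_cast hn
  nlinarith

end Derived



section Dir

variable {v : Fin m → EuclideanSpace ℝ (Fin n)} {x0 : EuclideanSpace ℝ (Fin n)}
  {lam : Fin m → ℝ} {x : EuclideanSpace ℝ (Fin n)} {F : Finset (Fin n)} {B : Finset (Fin m)}
  {sg : Fin m → ℝ} {C : ℕ}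

/-- Existence of a good unit direction: supported off `F`, orthogonal to absorbed
constraints, with small `Ξ`-weighted quadratic form. -/
lemma exists_dir (hn : 16 ≤ n) (hv : ∀ i, ‖v i‖ = 1)
    (hI : Inv v x0 lam x F B sg C) (hrun : 2 * F.card < n) :
    ∃ w : EuclideanSpace ℝ (Fin n), ‖w‖ = 1 ∧ (∀ j ∈ F, w j = 0) ∧
      (∀ i ∈ B, (inner ℝ (v i) w : ℝ) = 0) ∧
      (n : ℝ) / 4 * ∑ i ∈ K (n := n) lam, Real.exp ((n:ℝ) * sg i) * (inner ℝ (v i) w : ℝ) ^ 2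
        ≤ Xi (n := n) lam sg := by
  classical
  have hnp := npos hn
  -- the generating set
  set A : Finset (EuclideanSpace ℝ (Fin n)) :=
    (F.image fun j => EuclideanSpace.single j (1:ℝ)) ∪ B.image v with hA
  set U : Submodule ℝ (EuclideanSpace ℝ (Fin n)) :=
    (Submodule.span ℝ (A : Set (EuclideanSpace ℝ (Fin n))))ᗮ with hU
  -- dimension bound
  have hcB : (B.card : ℝ) ≤ (n : ℝ)/16 := cardB_le hn hI
  have hcBn : 16 * B.card ≤ n := by
    have : (16 * B.card : ℝ) ≤ n := by linarith
    exact_mod_cast this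
  have hDge : n / 4 + 1 ≤ Module.finrank ℝ U := by
    have h1 : Module.finrank ℝ (Submodule.span ℝ (A : Set (EuclideanSpace ℝ (Fin n))))
        ≤ F.card + B.card := by
      calc Module.finrank ℝ (Submodule.span ℝ (A : Set (EuclideanSpace ℝ (Fin n))))
          ≤ A.card := finrank_span_finset_le_card A
      _ ≤ (F.image fun j => EuclideanSpace.single j (1:ℝ)).card + (B.image v).card :=
          Finset.card_union_le _ _
      _ ≤ F.card + B.card := add_le_add (Finset.card_image_le) (Finset.card_image_le)
    have h2 := Submodule.finrank_add_finrank_orthogonal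
      (K := Submodule.span ℝ (A : Set (EuclideanSpace ℝ (Fin n))))
    have h3 : Module.finrank ℝ (EuclideanSpace ℝ (Fin n)) = n := finrank_euclideanSpace_fin
    have h4 : Module.finrank ℝ U =
        Module.finrank ℝ ((Submodule.span ℝ (A : Set (EuclideanSpace ℝ (Fin n))))ᗮ) := by
      rw [hU]
    omega
  set D := Module.finrank ℝ U with hD
  have hDpos : 0 < D := by omega
  -- orthonormal basis of U, coerced
  let ob := stdOrthonormalBasis ℝ U
  let W : Fin D → EuclideanSpace ℝ (Fin n) := fun k => ((ob k : U) : EuclideanSpace ℝ (Fin n))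
  have hWU : ∀ k, W k ∈ U := fun k => (ob k).2
  have hWo : Orthonormal ℝ W := by
    have h := ob.orthonormal
    constructor
    · intro k
      have := h.1 k
      rw [← this]
      rfl
    · intro k l hkl
      have := h.2 hkl
      rw [← Submodule.coe_inner]
      exact this
  -- membership facts
  have hWF : ∀ k, ∀ j ∈ F, W k j = 0 := by
    intro k j hj
    have hmem : EuclideanSpace.single j (1:ℝ) ∈ Submodule.span ℝ (A : Set (EuclideanSpace ℝ (Fin n))) := by
      apply Submodule.subset_span
      simp only [hA, Finset.coe_union, Set.mem_union]
      left
      simp only [Finset.coe_image, Set.mem_image, Finset.mem_coe]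
      exact ⟨j, hj, rfl⟩
    have := Submodule.inner_right_of_mem_orthogonal hmem (hWU k)
    rwa [EuclideanSpace.inner_single_left, map_one, one_mul] at this
  have hWB : ∀ k, ∀ i ∈ B, (inner ℝ (v i) (W k) : ℝ) = 0 := by
    intro k i hi
    have hmem : v i ∈ Submodule.span ℝ (A : Set (EuclideanSpace ℝ (Fin n))) := by
      apply Submodule.subset_span
      simp only [hA, Finset.coe_union, Set.mem_union]
      right
      simp only [Finset.coe_image, Set.mem_image, Finset.mem_coe]
      exact ⟨i, hi, rfl⟩
    exact Submodule.inner_right_of_mem_orthogonal hmem (hWU k)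
  -- choose minimizer among basis vectors
  set g : Fin D → ℝ := fun k =>
    ∑ i ∈ K (n := n) lam, Real.exp ((n:ℝ) * sg i) * (inner ℝ (v i) (W k) : ℝ) ^ 2 with hg
  obtain ⟨k0, _, hk0⟩ := Finset.exists_min_image Finset.univ g
    ⟨⟨0, hDpos⟩, Finset.mem_univ _⟩
  have hgnn : ∀ k, 0 ≤ g k := by
    intro k; apply Finset.sum_nonneg; intro i _; positivity
  -- averaging bound : D * g k0 ≤ Xi
  have havg : (D : ℝ) * g k0 ≤ Xi (n := n) lam sg := by
    have hcard : ((Finset.univ : Finset (Fin D)).card : ℝ) * g k0 = ∑ _k : Fin D, g k0 := by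
      rw [Finset.sum_const, nsmul_eq_mul]
    rw [Finset.card_univ, Fintype.card_fin] at hcard
    calc (D : ℝ) * g k0 = ∑ _k : Fin D, g k0 := hcard
    _ ≤ ∑ k : Fin D, g k := Finset.sum_le_sum fun k _ => hk0 k (Finset.mem_univ _)
    _ = ∑ i ∈ K (n := n) lam, Real.exp ((n:ℝ) * sg i) *
          (∑ k : Fin D, (inner ℝ (v i) (W k) : ℝ) ^ 2) := by
        rw [hg, Finset.sum_comm]
        apply Finset.sum_congr rfl
        intro i _
        rw [Finset.mul_sum]
    _ ≤ ∑ i ∈ K (n := n) lam, Real.exp ((n:ℝ) * sg i) * 1 := by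
        apply Finset.sum_le_sum
        intro i _
        apply mul_le_mul_of_nonneg_left _ (le_of_lt (Real.exp_pos _))
        have hb := hWo.sum_inner_products_le (v i) (s := Finset.univ)
        have : ∑ k : Fin D, (inner ℝ (v i) (W k) : ℝ) ^ 2
            = ∑ k : Fin D, ‖(inner ℝ (W k) (v i) : ℝ)‖ ^ 2 := by
          apply Finset.sum_congr rfl
          intro k _
          rw [Real.norm_eq_abs, sq_abs, real_inner_comm]
        rw [this]
        calc ∑ k : Fin D, ‖(inner ℝ (W k) (v i) : ℝ)‖ ^ 2 ≤ ‖v i‖ ^ 2 := hb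
        _ = 1 := by rw [hv i]; norm_num
    _ = Xi (n := n) lam sg := by
        unfold Xi
        exact Finset.sum_congr rfl (fun i _ => mul_one _)
  refine ⟨W k0, hWo.1 k0, hWF k0, hWB k0, ?_⟩
  have hD4 : (n : ℝ)/4 ≤ (D : ℝ) := by
    have : ((n/4 + 1 : ℕ) : ℝ) ≤ (D : ℝ) := by exact_mod_cast hDge
    push_cast at this
    have h4 : ((n/4 : ℕ) : ℝ) ≥ (n : ℝ)/4 - 1 := by
      have h6 : 4 * (n / 4) + n % 4 = n := Nat.div_add_mod n 4
      have h5 : n % 4 < 4 := Nat.mod_lt _ (by norm_num)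
      have h6' : (4 : ℝ) * ((n / 4 : ℕ) : ℝ) + ((n % 4 : ℕ) : ℝ) = (n : ℝ) := by
        exact_mod_cast congrArg (fun k : ℕ => (k : ℝ)) h6
      have h5' : ((n % 4 : ℕ) : ℝ) < 4 := by exact_mod_cast h5
      linarith
    linarith
  calc (n : ℝ)/4 * g k0 ≤ (D:ℝ) * g k0 := mul_le_mul_of_nonneg_right hD4 (hgnn k0)
  _ ≤ Xi (n := n) lam sg := havg

end Dir



section Cap

variable {v : Fin m → EuclideanSpace ℝ (Fin n)} {x0 : EuclideanSpace ℝ (Fin n)}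
  {lam : Fin m → ℝ} {x : EuclideanSpace ℝ (Fin n)} {F : Finset (Fin n)} {B : Finset (Fin m)}
  {sg : Fin m → ℝ} {C : ℕ}

/-- Line search: how far we can move along `w` staying in the polytope, capped at `gam n`. -/
lemma exists_cap (hn : 16 ≤ n)
    (hI : Inv v x0 lam x F B sg C)
    {w : EuclideanSpace ℝ (Fin n)} (hwF : ∀ j ∈ F, w j = 0)
    (hwB : ∀ i ∈ B, (inner ℝ (v i) w : ℝ) = 0) :
    ∃ t : ℝ, 0 < t ∧ t ≤ gam n ∧
      (∀ j, -1 ≤ x j + t * w j ∧ x j + t * w j ≤ 1) ∧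
      (∀ i ∈ K (n := n) lam, Xv v x0 x i + t * (inner ℝ (v i) w : ℝ) ≤ 11 * lam i) ∧
      (t = gam n ∨ (∃ j, j ∉ F ∧ (x j + t * w j = 1 ∨ x j + t * w j = -1)) ∨
        (∃ i, i ∈ K (n := n) lam ∧ i ∉ B ∧
          Xv v x0 x i + t * (inner ℝ (v i) w : ℝ) = 11 * lam i)) := by
  classical
  have hg0 := gam_pos (n := n) hn
  set b : Fin m → ℝ := fun i => (inner ℝ (v i) w : ℝ) with hb
  set fj : Fin n → ℝ := fun j =>
    if 0 < w j then (1 - x j) / (w j) else if w j < 0 then (-1 - x j) / (w j) else gam n with hfj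
  set gi : Fin m → ℝ := fun i =>
    if (i ∈ K (n := n) lam ∧ 0 < b i) then (11 * lam i - Xv v x0 x i) / (b i) else gam n with hgi
  set cand : Finset ℝ :=
    insert (gam n) ((Finset.univ.image fj) ∪ (Finset.univ.image gi)) with hcand
  have hne : cand.Nonempty := ⟨gam n, Finset.mem_insert_self _ _⟩
  set t : ℝ := cand.min' hne with ht
  -- every candidate is positive
  have hpos : ∀ s ∈ cand, 0 < s := by
    intro s hs
    rw [hcand] at hs
    rcases Finset.mem_insert.1 hs with h | h
    · rw [h]; exact hg0
    rcases Finset.mem_union.1 h with h | h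
    · obtain ⟨j, _, rfl⟩ := Finset.mem_image.1 h
      rw [hfj]
      dsimp only
      split_ifs with h1 h2
      · have hjF : j ∉ F := fun hj => by have := hwF j hj; rw [this] at h1; exact lt_irrefl 0 h1
        have := (hI.strictF j hjF).2
        apply div_pos (by linarith) h1
      · have hjF : j ∉ F := fun hj => by have := hwF j hj; rw [this] at h2; exact lt_irrefl 0 h2
        have := (hI.strictF j hjF).1
        exact div_pos_of_neg_of_neg (by linarith) h2
      · exact hg0
    · obtain ⟨i, _, rfl⟩ := Finset.mem_image.1 h
      rw [hgi]
      dsimp only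
      split_ifs with h1
      · obtain ⟨hiK, hib⟩ := h1
        have hiB : i ∉ B := fun hiB => by
          have := hwB i hiB; rw [hb] at hib; dsimp only at hib
          rw [this] at hib; exact lt_irrefl 0 hib
        have := hI.strictB i hiK hiB
        apply div_pos (by linarith) hib
      · exact hg0
  have htpos : 0 < t := hpos t (Finset.min'_mem _ _)
  have htgam : t ≤ gam n := Finset.min'_le _ _ (Finset.mem_insert_self _ _)
  have htfj : ∀ j, t ≤ fj j := fun j => Finset.min'_le _ _ (by
    rw [hcand]
    exact Finset.mem_insert_of_mem (Finset.mem_union_left _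
      (Finset.mem_image_of_mem fj (Finset.mem_univ j))))
  have htgi : ∀ i, t ≤ gi i := fun i => Finset.min'_le _ _ (by
    rw [hcand]
    exact Finset.mem_insert_of_mem (Finset.mem_union_right _
      (Finset.mem_image_of_mem gi (Finset.mem_univ i))))
  refine ⟨t, htpos, htgam, ?_, ?_, ?_⟩
  · -- coordinates stay in the cube
    intro j
    have hc := hI.cube j
    rcases lt_trichotomy (w j) 0 with hw | hw | hw
    · have h1 := htfj j
      rw [hfj] at h1
      dsimp only at h1
      rw [if_neg (by linarith), if_pos hw] at h1
      have h2 : -1 - x j ≤ t * w j := by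
        rw [le_div_iff_of_neg hw] at h1
        nlinarith
      constructor
      · linarith
      · nlinarith
    · rw [hw]; constructor <;> nlinarith [hc.1, hc.2]
    · have h1 := htfj j
      rw [hfj] at h1
      dsimp only at h1
      rw [if_pos hw] at h1
      have h2 : t * w j ≤ 1 - x j := by
        rw [le_div_iff₀ hw] at h1
        nlinarith
      constructor
      · nlinarith
      · linarith
  · -- constraints stay feasible
    intro i hiK
    rcases le_or_gt (b i) 0 with hbi | hbi
    · have := hI.feas i hiK
      have : t * b i ≤ 0 := mul_nonpos_of_nonneg_of_nonpos (le_of_lt htpos) hbi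
      have h3 := hI.feas i hiK
      rw [hb] at this
      dsimp only at this
      linarith
    · have h1 := htgi i
      rw [hgi] at h1
      dsimp only at h1
      rw [if_pos ⟨hiK, hbi⟩] at h1
      rw [le_div_iff₀ hbi] at h1
      rw [hb] at h1 hbi
      dsimp only at h1 hbi
      linarith
  · -- either full step or some new tight object
    by_cases hfull : t = gam n
    · exact Or.inl hfull
    right
    have hmem := Finset.min'_mem cand hne
    have hmem2 : t ∈ insert (gam n) ((Finset.univ.image fj) ∪ (Finset.univ.image gi)) := hmem
    rcases Finset.mem_insert.1 hmem2 with h | h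
    · exact absurd h hfull
    rcases Finset.mem_union.1 h with h | h
    · obtain ⟨j, _, hj⟩ := Finset.mem_image.1 h
      left
      rw [hfj] at hj
      dsimp only at hj
      split_ifs at hj with h1 h2
      · refine ⟨j, ?_, Or.inl ?_⟩
        · intro hjF; have := hwF j hjF; rw [this] at h1; exact lt_irrefl 0 h1
        · have hne1 : w j ≠ 0 := ne_of_gt h1
          rw [← hj]; field_simp; ring
      · refine ⟨j, ?_, Or.inr ?_⟩
        · intro hjF; have := hwF j hjF; rw [this] at h2; exact lt_irrefl 0 h2
        · have hne2 : w j ≠ 0 := ne_of_lt h2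
          rw [← hj]; field_simp; ring
      · exact absurd hj.symm hfull
    · obtain ⟨i, _, hi⟩ := Finset.mem_image.1 h
      right
      rw [hgi] at hi
      dsimp only at hi
      split_ifs at hi with h1
      · obtain ⟨hiK, hib⟩ := h1
        refine ⟨i, hiK, ?_, ?_⟩
        · intro hiB; have := hwB i hiB; rw [hb] at hib; dsimp only at hib
          rw [this] at hib; exact lt_irrefl 0 hib
        · have hbne : b i ≠ 0 := ne_of_gt hib
          have hgoal : Xv v x0 x i + t * b i = 11 * lam i := by
            rw [← hi]; field_simp; ring
          exact hgoal
      · exact absurd hi.symm hfull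

end Cap



section Child

variable {v : Fin m → EuclideanSpace ℝ (Fin n)} {x0 : EuclideanSpace ℝ (Fin n)}
  {lam : Fin m → ℝ} {x : EuclideanSpace ℝ (Fin n)} {F : Finset (Fin n)} {B : Finset (Fin m)}
  {sg : Fin m → ℝ} {C : ℕ}

lemma apply_add_smul (x w : EuclideanSpace ℝ (Fin n)) (t : ℝ) (j : Fin n) :
    (x + t • w) j = x j + t * w j := rfl

lemma Xv_add_smul (v : Fin m → EuclideanSpace ℝ (Fin n)) (x0 x w : EuclideanSpace ℝ (Fin n))
    (t : ℝ) (i : Fin m) :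
    Xv v x0 (x + t • w) i = Xv v x0 x i + t * (inner ℝ (v i) w : ℝ) := by
  unfold Xv
  have h : x + t • w - x0 = (x - x0) + t • w := by abel
  rw [h, inner_add_right, real_inner_smul_right]

lemma norm_add_smul_sq (x w : EuclideanSpace ℝ (Fin n)) (t : ℝ) :
    ‖x + t • w‖ ^ 2 = ‖x‖ ^ 2 + 2 * t * (inner ℝ x w : ℝ) + t ^ 2 * ‖w‖ ^ 2 := by
  rw [@norm_add_sq_real, real_inner_smul_right, norm_smul]
  simp [mul_pow]
  ring

lemma Yp_update {x' : EuclideanSpace ℝ (Fin n)} {sg' : Fin m → ℝ} {d e : ℝ} (i : Fin m)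
    (hX : Xv v x0 x' i = Xv v x0 x i + d) (hs : sg' i = sg i + e) :
    Yp v x0 lam x' sg' i = Yp v x0 lam x sg i * Real.exp (sp lam i * d - (sp lam i) ^ 2 * e) := by
  unfold Yp
  rw [← Real.exp_add]
  congr 1
  rw [hX, hs]
  ring

/-- inner products with unit vectors are at most 1 in absolute value -/
lemma inner_abs_le_one (hv : ∀ i, ‖v i‖ = 1) {u : EuclideanSpace ℝ (Fin n)} (hu : ‖u‖ = 1)
    (i : Fin m) : |(inner ℝ (v i) u : ℝ)| ≤ 1 := by
  calc |(inner ℝ (v i) u : ℝ)| ≤ ‖v i‖ * ‖u‖ := abs_real_inner_le_norm _ _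
  _ = 1 := by rw [hv i, hu, mul_one]

/-- All invariant fields for a child state, except that the potential bound `pot` is assumed. -/
lemma childInv (hn : 16 ≤ n) (hv : ∀ i, ‖v i‖ = 1) (hnonneg : ∀ i, 0 ≤ lam i)
    (hsum : ∑ i, Real.exp (-(lam i) ^ 2 / 16) ≤ (n : ℝ) / 32)
    (hI : Inv v x0 lam x F B sg C)
    {u : EuclideanSpace ℝ (Fin n)} (hu : ‖u‖ = 1) (huF : ∀ j ∈ F, u j = 0)
    (huB : ∀ i ∈ B, (inner ℝ (v i) u : ℝ) = 0)
    {sg' : Fin m → ℝ} (hsg' : ∀ i, sg' i = sg i + (1/n) * (inner ℝ (v i) u : ℝ) ^ 2)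
    (hquad : (n : ℝ)/4 * ∑ i ∈ K (n := n) lam,
        Real.exp ((n:ℝ) * sg i) * (inner ℝ (v i) u : ℝ) ^ 2 ≤ Xi (n := n) lam sg)
    {t : ℝ} (ht0 : 0 < t) (htg : t ≤ gam n)
    (hcoords : ∀ j, -1 ≤ x j + t * u j ∧ x j + t * u j ≤ 1)
    (hcons : ∀ i ∈ K (n := n) lam, Xv v x0 x i + t * (inner ℝ (v i) u : ℝ) ≤ 11 * lam i)
    (hterm : t = gam n ∨ (∃ j, j ∉ F ∧ (x j + t * u j = 1 ∨ x j + t * u j = -1)) ∨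
        (∃ i, i ∈ K (n := n) lam ∧ i ∉ B ∧
          Xv v x0 x i + t * (inner ℝ (v i) u : ℝ) = 11 * lam i))
    {C' : ℕ} (hC' : C' = C + (if t = gam n then 1 else 0))
    (hpot : MM v x0 lam (x + t • u) sg' C' ≤ (n : ℝ)/32) :
    ∃ F' B', Inv v x0 lam (x + t • u) F' B' sg' C' ∧
      C + F.card + B.card + 1 ≤ C' + F'.card + B'.card := by
  classical
  have hnp := npos hn
  set x' : EuclideanSpace ℝ (Fin n) := x + t • u with hx'
  have hx'j : ∀ j, x' j = x j + t * u j := fun j => apply_add_smul x u t j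
  have hX' : ∀ i, Xv v x0 x' i = Xv v x0 x i + t * (inner ℝ (v i) u : ℝ) :=
    fun i => Xv_add_smul v x0 x u t i
  set F' : Finset (Fin n) := Finset.univ.filter (fun j => x' j = 1 ∨ x' j = -1) with hF'
  set B' : Finset (Fin m) := B ∪ ((K (n := n) lam).filter
      (fun i => Xv v x0 x' i = 11 * lam i)) with hB'
  have hFsub : F ⊆ F' := by
    intro j hj
    rw [hF', Finset.mem_filter]
    refine ⟨Finset.mem_univ _, ?_⟩
    rw [hx'j j, huF j hj, mul_zero, add_zero]
    exact hI.tightF j hj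
  have hBsub : B ⊆ B' := Finset.subset_union_left
  have hB'K : B' ⊆ K (n := n) lam := by
    rw [hB']
    apply Finset.union_subset hI.BsubK (Finset.filter_subset _ _)
  -- feasibility of new point
  have hfeas' : ∀ i ∈ K (n := n) lam, Xv v x0 x' i ≤ 11 * lam i := by
    intro i hi; rw [hX' i]; exact hcons i hi
  -- sg' bounds
  have hsg20 := sg_le_20 hn hsum hI
  have hinc : ∀ i, 0 ≤ (1/(n:ℝ)) * (inner ℝ (v i) u : ℝ) ^ 2 ∧
      (1/(n:ℝ)) * (inner ℝ (v i) u : ℝ) ^ 2 ≤ 1 := by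
    intro i
    have h1 := inner_abs_le_one hv hu i
    have h2 : (inner ℝ (v i) u : ℝ) ^ 2 ≤ 1 := by
      rw [← sq_abs]; nlinarith [abs_nonneg (inner ℝ (v i) u : ℝ)]
    constructor
    · positivity
    · have h3 : (1:ℝ)/n ≤ 1 := by
        rw [div_le_one hnp]
        have h16 : (16:ℝ) ≤ n := by exact_mod_cast hn
        linarith
      nlinarith [sq_nonneg (inner ℝ (v i) u : ℝ)]
  refine ⟨F', B', ?_, ?_⟩
  · refine ⟨?_, ?_, ?_, hfeas', ?_, hB'K, ?_, ?_, hpot, ?_⟩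
    · intro j; rw [hx'j j]; exact hcoords j
    · intro j hj
      rw [hF', Finset.mem_filter] at hj
      exact hj.2
    · intro j hj
      rw [hF', Finset.mem_filter] at hj
      push_neg at hj
      have h2 := hj (Finset.mem_univ j)
      have h3 := hcoords j
      rw [← hx'j j] at h3
      constructor
      · rcases lt_or_eq_of_le h3.1 with h | h
        · exact h
        · exact absurd h.symm h2.2
      · rcases lt_or_eq_of_le h3.2 with h | h
        · exact h
        · exact absurd h h2.1
    · -- strictB
      intro i hiK hiB'
      have h1 : Xv v x0 x' i ≠ 11 * lam i := by
        intro heq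
        apply hiB'
        rw [hB']
        apply Finset.mem_union_right
        rw [Finset.mem_filter]
        exact ⟨hiK, heq⟩
      exact lt_of_le_of_ne (hfeas' i hiK) h1
    · -- absorbed
      intro i hiB'
      rw [hB', Finset.mem_union] at hiB'
      rcases hiB' with hiB | hiNew
      · have hb0 := huB i hiB
        have hXeq : Xv v x0 x' i = Xv v x0 x i := by
          rw [hX' i, hb0, mul_zero, add_zero]
        have hseq : sg' i = sg i := by
          rw [hsg' i, hb0]; ring
        have hYeq : Yp v x0 lam x' sg' i = Yp v x0 lam x sg i := by
          unfold Yp; rw [hXeq, hseq]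
        rw [hYeq]
        exact hI.absorbed i hiB
      · rw [Finset.mem_filter] at hiNew
        obtain ⟨hiK, hiEq⟩ := hiNew
        have hlam0 := hnonneg i
        have hsg21 : sg' i ≤ 21 := by
          rw [hsg' i]
          have := (hinc i).2
          have := hsg20 i hiK
          linarith
        have hsg0 : 0 ≤ sg' i := by
          rw [hsg' i]
          have := (hinc i).1
          have := hI.sgmono i
          linarith
        unfold Yp
        rw [hiEq]
        rw [show (1:ℝ) = Real.exp 0 by rw [Real.exp_zero]]
        apply Real.exp_le_exp.2
        unfold sp
        have hsp2 : (11 * lam i / 36) ^ 2 * sg' i ≤ (11 * lam i / 36) ^ 2 * 21 :=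
          mul_le_mul_of_nonneg_left hsg21 (by positivity)
        nlinarith [sq_nonneg (lam i)]
    · -- sgmono
      intro i
      rw [hsg' i]
      have := (hinc i).1
      have := hI.sgmono i
      linarith
    · -- xi
      have hgrow : C + F.card + B.card + 1 ≤ C' + F'.card + B'.card := by
        have hcF := Finset.card_le_card hFsub
        have hcB := Finset.card_le_card hBsub
        have hCge : C ≤ C' := by rw [hC']; split_ifs <;> omega
        rcases hterm with h | ⟨j, hjF, hj⟩ | ⟨i, hiK, hiB, hiEq⟩
        · have : C' = C + 1 := by rw [hC', if_pos h]
          omega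
        · have hjF' : j ∈ F' := by
            rw [hF', Finset.mem_filter]
            refine ⟨Finset.mem_univ _, ?_⟩
            rw [hx'j j]
            exact hj
          have hss : F ⊂ F' := (Finset.ssubset_iff_of_subset hFsub).2 ⟨j, hjF', hjF⟩
          have := Finset.card_lt_card hss
          omega
        · have hiB' : i ∈ B' := by
            rw [hB']
            apply Finset.mem_union_right
            rw [Finset.mem_filter]
            exact ⟨hiK, by rw [hX' i]; exact hiEq⟩
          have hss : B ⊂ B' := (Finset.ssubset_iff_of_subset hBsub).2 ⟨i, hiB', hiB⟩
          have := Finset.card_lt_card hss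
          omega
      -- one-step growth of Xi
      set Q : ℝ := ∑ i ∈ K (n := n) lam, Real.exp ((n:ℝ) * sg i) * (inner ℝ (v i) u : ℝ) ^ 2
        with hQdef
      have hQnn : 0 ≤ Q := Finset.sum_nonneg fun i _ => by positivity
      have hstep : Xi (n := n) lam sg' ≤ Xi (n := n) lam sg * (1 + 8/n) := by
        have hterm1 : ∀ i ∈ K (n := n) lam, Real.exp ((n:ℝ) * sg' i)
            ≤ Real.exp ((n:ℝ) * sg i) * (1 + 2 * (inner ℝ (v i) u : ℝ) ^ 2) := by
          intro i _
          have hb := hinc i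
          have hbb : (inner ℝ (v i) u : ℝ) ^ 2 ≤ 1 := by
            have h1 := inner_abs_le_one hv hu i
            rw [← sq_abs]; nlinarith [abs_nonneg (inner ℝ (v i) u : ℝ)]
          have hsplit : (n:ℝ) * sg' i = n * sg i + (inner ℝ (v i) u : ℝ) ^ 2 := by
            rw [hsg' i]
            field_simp
          rw [hsplit, Real.exp_add]
          apply mul_le_mul_of_nonneg_left _ (le_of_lt (Real.exp_pos _))
          have hz0 : (0:ℝ) ≤ (inner ℝ (v i) u : ℝ) ^ 2 := sq_nonneg _
          have := exp_quad (z := (inner ℝ (v i) u : ℝ) ^ 2) (by rw [abs_of_nonneg hz0]; exact hbb)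
          nlinarith
        have h1 : Xi (n := n) lam sg' ≤ Xi (n := n) lam sg + 2 * Q := by
          calc Xi (n := n) lam sg' ≤ ∑ i ∈ K (n := n) lam,
              Real.exp ((n:ℝ) * sg i) * (1 + 2 * (inner ℝ (v i) u : ℝ) ^ 2) :=
                Finset.sum_le_sum hterm1
          _ = Xi (n := n) lam sg + 2 * Q := by
              unfold Xi
              rw [hQdef, Finset.mul_sum, ← Finset.sum_add_distrib]
              apply Finset.sum_congr rfl
              intro i _
              ring
        have h8 : (0:ℝ) ≤ 8/n := by positivity
        have h2 := mul_le_mul_of_nonneg_left hquad h8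
        have heq : (8/(n:ℝ)) * ((n:ℝ)/4 * Q) = 2 * Q := by
          field_simp
          ring
        rw [heq] at h2
        have : Xi (n := n) lam sg * (1 + 8/n) = Xi (n := n) lam sg + (8/n) * Xi (n := n) lam sg := by
          ring
        linarith
      have hbase : (1:ℝ) ≤ 1 + 8/n := by
        have : (0:ℝ) ≤ 8/n := by positivity
        linarith
      calc Xi (n := n) lam sg' ≤ Xi (n := n) lam sg * (1 + 8/n) := hstep
      _ ≤ (((K (n := n) lam).card : ℝ) * (1 + 8/n) ^ (C + F.card + B.card)) * (1 + 8/n) :=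
          mul_le_mul_of_nonneg_right hI.xi (by linarith)
      _ = ((K (n := n) lam).card : ℝ) * (1 + 8/n) ^ (C + F.card + B.card + 1) := by
          rw [mul_assoc, ← pow_succ]
      _ ≤ ((K (n := n) lam).card : ℝ) * (1 + 8/n) ^ (C' + F'.card + B'.card) := by
          apply mul_le_mul_of_nonneg_left _ (by positivity)
          exact pow_le_pow_right₀ hbase hgrow
  · -- growth
    have hcF := Finset.card_le_card hFsub
    have hcB := Finset.card_le_card hBsub
    have hCge : C ≤ C' := by rw [hC']; split_ifs <;> omega
    rcases hterm with h | ⟨j, hjF, hj⟩ | ⟨i, hiK, hiB, hiEq⟩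
    · have : C' = C + 1 := by rw [hC', if_pos h]
      omega
    · have hjF' : j ∈ F' := by
        rw [hF', Finset.mem_filter]
        refine ⟨Finset.mem_univ _, ?_⟩
        rw [hx'j j]
        exact hj
      have hss : F ⊂ F' := (Finset.ssubset_iff_of_subset hFsub).2 ⟨j, hjF', hjF⟩
      have := Finset.card_lt_card hss
      omega
    · have hiB' : i ∈ B' := by
        rw [hB']
        apply Finset.mem_union_right
        rw [Finset.mem_filter]
        exact ⟨hiK, by rw [hX' i]; exact hiEq⟩
      have hss : B ⊂ B' := (Finset.ssubset_iff_of_subset hBsub).2 ⟨i, hiB', hiB⟩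
      have := Finset.card_lt_card hss
      omega

end Child



section Step

variable {v : Fin m → EuclideanSpace ℝ (Fin n)} {x0 : EuclideanSpace ℝ (Fin n)}
  {lam : Fin m → ℝ} {x : EuclideanSpace ℝ (Fin n)} {F : Finset (Fin n)} {B : Finset (Fin m)}
  {sg : Fin m → ℝ} {C : ℕ}

lemma step (hn : 16 ≤ n) (hv : ∀ i, ‖v i‖ = 1) (hnonneg : ∀ i, 0 ≤ lam i)
    (hsum : ∑ i, Real.exp (-(lam i) ^ 2 / 16) ≤ (n : ℝ) / 32)
    (hI : Inv v x0 lam x F B sg C) (hrun : 2 * F.card < n) :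
    ∃ (x' : EuclideanSpace ℝ (Fin n)) (F' : Finset (Fin n)) (B' : Finset (Fin m))
      (sg' : Fin m → ℝ) (C' : ℕ), Inv v x0 lam x' F' B' sg' C' ∧
      C + F.card + B.card + 1 ≤ C' + F'.card + B'.card := by
  classical
  have hnp := npos hn
  have hg0 := gam_pos (n := n) hn
  have hg2 := gam_sq (n := n) hn
  obtain ⟨w, hw1, hwF, hwB, hquad⟩ := exists_dir hn hv hI hrun
  have hw1' : ‖-w‖ = 1 := by rw [norm_neg]; exact hw1
  have hwF' : ∀ j ∈ F, (-w) j = 0 := by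
    intro j hj
    have h := hwF j hj
    show -(w j) = 0
    rw [h, neg_zero]
  have hwB' : ∀ i ∈ B, (inner ℝ (v i) (-w) : ℝ) = 0 := by
    intro i hi
    rw [inner_neg_right, hwB i hi, neg_zero]
  have hquad' : (n : ℝ)/4 * ∑ i ∈ K (n := n) lam,
      Real.exp ((n:ℝ) * sg i) * (inner ℝ (v i) (-w) : ℝ) ^ 2 ≤ Xi (n := n) lam sg := by
    have : ∀ i ∈ K (n := n) lam, Real.exp ((n:ℝ) * sg i) * (inner ℝ (v i) (-w) : ℝ) ^ 2
        = Real.exp ((n:ℝ) * sg i) * (inner ℝ (v i) w : ℝ) ^ 2 := by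
      intro i _
      rw [inner_neg_right, neg_sq]
    rw [Finset.sum_congr rfl this]
    exact hquad
  obtain ⟨tp, htp0, htpg, hcoordsp, hconsp, htermp⟩ := exists_cap hn hI hwF hwB
  obtain ⟨tm, htm0, htmg, hcoordsm, hconsm, htermm⟩ := exists_cap hn hI hwF' hwB'
  set b : Fin m → ℝ := fun i => (inner ℝ (v i) w : ℝ) with hb
  set sg' : Fin m → ℝ := fun i => sg i + (1/(n:ℝ)) * (b i) ^ 2 with hsg'
  have hsg'w : ∀ i, sg' i = sg i + (1/(n:ℝ)) * (inner ℝ (v i) w : ℝ) ^ 2 := fun i => rfl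
  have hsg'mw : ∀ i, sg' i = sg i + (1/(n:ℝ)) * (inner ℝ (v i) (-w) : ℝ) ^ 2 := by
    intro i
    rw [inner_neg_right, neg_sq]
  set Cp := C + (if tp = gam n then 1 else 0) with hCp
  set Cm := C + (if tm = gam n then 1 else 0) with hCm
  set p : ℝ := tm / (tp + tm) with hp
  set q : ℝ := tp / (tp + tm) with hq
  have hptm : 0 < tp + tm := by linarith
  have hp0 : 0 ≤ p := by positivity
  have hq0 : 0 ≤ q := by positivity
  have hpq : p + q = 1 := by rw [hp, hq]; field_simp; ring
  -- Phi average
  have hPhi : p * Phi v x0 lam (x + tp • w) sg' + q * Phi v x0 lam (x + tm • (-w)) sg'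
      ≤ Phi v x0 lam x sg := by
    unfold Phi
    rw [Finset.mul_sum, Finset.mul_sum, ← Finset.sum_add_distrib]
    apply Finset.sum_le_sum
    intro i hi
    have hXp : Xv v x0 (x + tp • w) i = Xv v x0 x i + tp * b i := Xv_add_smul v x0 x w tp i
    have hXm : Xv v x0 (x + tm • (-w)) i = Xv v x0 x i + (-(tm * b i)) := by
      rw [Xv_add_smul, inner_neg_right]
      rw [hb]
      ring
    have hYp := Yp_update (v := v) (x0 := x0) (lam := lam) (sg := sg) i hXp (hsg'w i)
    have hYm := Yp_update (v := v) (x0 := x0) (lam := lam) (sg := sg) i hXm (hsg'w i)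
    rw [hYp, hYm]
    set z : ℝ := sp lam i * b i with hz
    have hzgam : |z| * gam n ≤ 1 := by
      have h1 : |b i| ≤ 1 := inner_abs_le_one hv hw1 i
      have h2 : 0 ≤ sp lam i := sp_nonneg hnonneg i
      have h3 : |z| ≤ sp lam i := by
        rw [hz, abs_mul, abs_of_nonneg h2]
        nlinarith
      have h4 := sp_gam_le hn hnonneg hi
      nlinarith
    have h2p := two_point (z := z) htp0 htm0 htpg htmg hzgam
    have e1 : sp lam i * (tp * b i) - (sp lam i) ^ 2 * ((1/(n:ℝ)) * (inner ℝ (v i) w : ℝ) ^ 2)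
        = tp * z - (gam n) ^ 2 * z ^ 2 := by
      rw [hg2, hz, hb]
      ring
    have e2 : sp lam i * (-(tm * b i)) - (sp lam i) ^ 2 * ((1/(n:ℝ)) * (inner ℝ (v i) w : ℝ) ^ 2)
        = -(tm * z) - (gam n) ^ 2 * z ^ 2 := by
      rw [hg2, hz, hb]
      ring
    rw [e1, e2]
    have hexp1 : Real.exp (tp * z - (gam n) ^ 2 * z ^ 2)
        = Real.exp (tp * z) * Real.exp (-((gam n) ^ 2 * z ^ 2)) := by
      rw [← Real.exp_add]; ring_nf
    have hexp2 : Real.exp (-(tm * z) - (gam n) ^ 2 * z ^ 2)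
        = Real.exp (-(tm * z)) * Real.exp (-((gam n) ^ 2 * z ^ 2)) := by
      rw [← Real.exp_add]; ring_nf
    rw [hexp1, hexp2]
    have hY0 : 0 ≤ Yp v x0 lam x sg i := le_of_lt (Yp_pos x sg i)
    have hE0 : 0 ≤ Real.exp (-((gam n) ^ 2 * z ^ 2)) := le_of_lt (Real.exp_pos _)
    calc p * (Yp v x0 lam x sg i * (Real.exp (tp * z) * Real.exp (-((gam n) ^ 2 * z ^ 2))))
        + q * (Yp v x0 lam x sg i * (Real.exp (-(tm * z)) * Real.exp (-((gam n) ^ 2 * z ^ 2))))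
        = (Yp v x0 lam x sg i * Real.exp (-((gam n) ^ 2 * z ^ 2)))
          * (p * Real.exp (tp * z) + q * Real.exp (-(tm * z))) := by ring
    _ ≤ (Yp v x0 lam x sg i * Real.exp (-((gam n) ^ 2 * z ^ 2)))
          * Real.exp ((gam n) ^ 2 * z ^ 2) := by
        apply mul_le_mul_of_nonneg_left _ (by positivity)
        exact h2p
    _ = Yp v x0 lam x sg i := by
        rw [mul_assoc, ← Real.exp_add]
        simp
  -- norm average
  have hnorm : p * ‖x + tp • w‖ ^ 2 + q * ‖x + tm • (-w)‖ ^ 2 = ‖x‖ ^ 2 + tp * tm := by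
    rw [norm_add_smul_sq, norm_add_smul_sq, hw1, hw1']
    rw [inner_neg_right]
    rw [hp, hq]
    field_simp
    ring
  -- C average
  have hCavg : p * ((Cp : ℝ)/n) + q * ((Cm : ℝ)/n) ≤ (C:ℝ)/n + tp * tm := by
    set ia : ℝ := (if tp = gam n then (1:ℝ) else 0) with hia
    set ib : ℝ := (if tm = gam n then (1:ℝ) else 0) with hib
    have hCpr : (Cp : ℝ) = C + ia := by
      rw [hCp, hia]; split_ifs <;> push_cast <;> ring
    have hCmr : (Cm : ℝ) = C + ib := by
      rw [hCm, hib]; split_ifs <;> push_cast <;> ring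
    have hng2 : (n:ℝ) * gam n ^ 2 = 1 := by
      rw [hg2]; field_simp
    have hkey : p * ia + q * ib ≤ (n:ℝ) * (tp * tm) := by
      rw [hia, hib]
      split_ifs with h1 h2 h3
      · rw [mul_one, mul_one]
        have hgg : (n:ℝ) * (tp * tm) = 1 := by
          rw [h1, h2, ← sq]; exact hng2
        rw [hgg]
        linarith [hpq]
      · rw [mul_one, mul_zero, add_zero, hp]
        rw [div_le_iff₀ hptm]
        have expand : (n:ℝ) * (tp * tm) * (tp + tm)
            = ((n:ℝ) * tp ^ 2) * tm + ((n:ℝ) * tp) * tm ^ 2 := by ring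
        have h1' : (n:ℝ) * tp ^ 2 = 1 := by rw [h1]; exact hng2
        have hpos2 : (0:ℝ) ≤ ((n:ℝ) * tp) * tm ^ 2 := by positivity
        nlinarith
      · rw [mul_zero, mul_one, zero_add, hq]
        rw [div_le_iff₀ hptm]
        have expand : (n:ℝ) * (tp * tm) * (tp + tm)
            = ((n:ℝ) * tm ^ 2) * tp + ((n:ℝ) * tm) * tp ^ 2 := by ring
        have h3' : (n:ℝ) * tm ^ 2 = 1 := by rw [h3]; exact hng2
        have hpos2 : (0:ℝ) ≤ ((n:ℝ) * tm) * tp ^ 2 := by positivity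
        nlinarith
      · rw [mul_zero, mul_zero, add_zero]
        positivity
    have h2 : (p * ia + q * ib)/n ≤ tp * tm := by
      rw [div_le_iff₀ hnp]
      calc p * ia + q * ib ≤ (n:ℝ) * (tp * tm) := hkey
      _ = tp * tm * n := by ring
    have hfin : p * (((C:ℝ) + ia)/n) + q * (((C:ℝ) + ib)/n)
        = (p + q) * ((C:ℝ)/n) + (p * ia + q * ib)/n := by
      field_simp
      ring
    rw [hCpr, hCmr, hfin, hpq, one_mul]
    linarith
  -- combine into MM average
  have hMM : p * MM v x0 lam (x + tp • w) sg' Cp + q * MM v x0 lam (x + tm • (-w)) sg' Cm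
      ≤ MM v x0 lam x sg C := by
    unfold MM
    have expand : p * (Phi v x0 lam (x + tp • w) sg' + 1/32 * ((Cp:ℝ)/n - ‖x + tp • w‖^2))
        + q * (Phi v x0 lam (x + tm • (-w)) sg' + 1/32 * ((Cm:ℝ)/n - ‖x + tm • (-w)‖^2))
        = (p * Phi v x0 lam (x + tp • w) sg' + q * Phi v x0 lam (x + tm • (-w)) sg')
          + 1/32 * ((p * ((Cp:ℝ)/n) + q * ((Cm:ℝ)/n))
            - (p * ‖x + tp • w‖^2 + q * ‖x + tm • (-w)‖^2)) := by ring
    rw [expand, hnorm]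
    have := hI.pot
    unfold MM at this
    linarith [hPhi, hCavg]
  have hMMx := hI.pot
  -- choose the better child
  rcases le_total (MM v x0 lam (x + tp • w) sg' Cp) (MM v x0 lam (x + tm • (-w)) sg' Cm)
    with hch | hch
  · have hpot' : MM v x0 lam (x + tp • w) sg' Cp ≤ (n:ℝ)/32 := by
      nlinarith [hMM, hMMx, hp0, hq0, hpq]
    obtain ⟨F', B', hInv', hgrow⟩ := childInv hn hv hnonneg hsum hI hw1 hwF hwB
      hsg'w hquad htp0 htpg hcoordsp hconsp htermp (C' := Cp) rfl hpot'
    exact ⟨_, F', B', sg', Cp, hInv', hgrow⟩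
  · have hpot' : MM v x0 lam (x + tm • (-w)) sg' Cm ≤ (n:ℝ)/32 := by
      nlinarith [hMM, hMMx, hp0, hq0, hpq]
    obtain ⟨F', B', hInv', hgrow⟩ := childInv hn hv hnonneg hsum hI hw1' hwF' hwB'
      hsg'mw hquad' htm0 htmg hcoordsm hconsm htermm (C' := Cm) rfl hpot'
    exact ⟨_, F', B', sg', Cm, hInv', hgrow⟩

end Step



section Final

variable {v : Fin m → EuclideanSpace ℝ (Fin n)} {x0 : EuclideanSpace ℝ (Fin n)}
  {lam : Fin m → ℝ}

lemma extract {x : EuclideanSpace ℝ (Fin n)} {F : Finset (Fin n)} {B : Finset (Fin m)}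
    {sg : Fin m → ℝ} {C : ℕ} (hn : 16 ≤ n) (hv : ∀ i, ‖v i‖ = 1) (hnonneg : ∀ i, 0 ≤ lam i)
    (hx0 : ∀ j, x0 j ∈ Set.Icc (-1 : ℝ) 1)
    (hI : Inv v x0 lam x F B sg C) (hF : n ≤ 2 * F.card) :
    (∀ j, x j ∈ Set.Icc (-1 : ℝ) 1) ∧
      (∀ i, (inner ℝ (v i) (x - x0) : ℝ) ≤ 11 * lam i) ∧
      (n : ℝ) / 2 ≤ (({j : Fin n | x j = 1 ∨ x j = -1}).ncard : ℝ) := by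
  have hnp := npos hn
  refine ⟨?_, ?_, ?_⟩
  · intro j
    rw [Set.mem_Icc]
    exact hI.cube j
  · intro i
    by_cases hiK : i ∈ K (n := n) lam
    · exact hI.feas i hiK
    · -- automatic : 11 lam i ≥ 2 sqrt n ≥ ‖x - x0‖
      have hKc : ¬ (121 * (lam i) ^ 2 ≤ 4 * n) := by
        intro h
        exact hiK (by simp [K, h])
      push_neg at hKc
      have hnorm : ‖x - x0‖ ^ 2 ≤ 4 * n := by
        have : ‖x - x0‖ ^ 2 = ∑ j, ((x - x0) j) ^ 2 := norm_sq_eq _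
        rw [this]
        calc ∑ j, ((x - x0) j) ^ 2 ≤ ∑ _j : Fin n, (4:ℝ) := by
              apply Finset.sum_le_sum
              intro j _
              have h1 := hI.cube j
              have h2 := hx0 j
              rw [Set.mem_Icc] at h2
              have : (x - x0) j = x j - x0 j := rfl
              rw [this]
              nlinarith [h1.1, h1.2, h2.1, h2.2]
        _ = 4 * n := by simp [mul_comm]
      have h2 : ‖x - x0‖ ≤ 11 * lam i := by
        have ha : ‖x - x0‖ = Real.sqrt (‖x - x0‖ ^ 2) := (Real.sqrt_sq (norm_nonneg _)).symm
        have hb2 : (0:ℝ) ≤ 11 * lam i := by have := hnonneg i; linarith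
        have hc : (11 * lam i) = Real.sqrt ((11 * lam i) ^ 2) := (Real.sqrt_sq hb2).symm
        rw [ha, hc]
        apply Real.sqrt_le_sqrt
        nlinarith
      calc (inner ℝ (v i) (x - x0) : ℝ) ≤ ‖v i‖ * ‖x - x0‖ := real_inner_le_norm _ _
      _ = ‖x - x0‖ := by rw [hv i, one_mul]
      _ ≤ 11 * lam i := h2
  · have hsub : (↑F : Set (Fin n)) ⊆ {j : Fin n | x j = 1 ∨ x j = -1} := by
      intro j hj
      rw [Finset.mem_coe] at hj
      exact hI.tightF j hj
    have h1 : F.card ≤ ({j : Fin n | x j = 1 ∨ x j = -1}).ncard := by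
      rw [← Set.ncard_coe_finset]
      exact Set.ncard_le_ncard hsub (Set.toFinite _)
    have h2 : (n : ℝ) ≤ 2 * F.card := by exact_mod_cast hF
    have h3 : (F.card : ℝ) ≤ (({j : Fin n | x j = 1 ∨ x j = -1}).ncard : ℝ) := by
      exact_mod_cast h1
    linarith

lemma init (hn : 16 ≤ n) (hnonneg : ∀ i, 0 ≤ lam i)
    (hsum : ∑ i, Real.exp (-(lam i) ^ 2 / 16) ≤ (n : ℝ) / 32)
    (hx0 : ∀ j, x0 j ∈ Set.Icc (-1 : ℝ) 1) :
    Inv v x0 lam x0 (Finset.univ.filter (fun j => x0 j = 1 ∨ x0 j = -1))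
      ((K (n := n) lam).filter (fun i => lam i = 0)) (fun _ => 0) 0 := by
  classical
  have hX0 : ∀ i, Xv v x0 x0 i = 0 := by
    intro i
    unfold Xv
    rw [sub_self, inner_zero_right]
  have hY0 : ∀ i, Yp v x0 lam x0 (fun _ => 0) i = Real.exp (-(lam i) ^ 2 / 16) := by
    intro i
    unfold Yp
    rw [hX0 i]
    ring_nf
  refine ⟨?_, ?_, ?_, ?_, ?_, ?_, ?_, ?_, ?_, ?_⟩
  · intro j; have := hx0 j; rwa [Set.mem_Icc] at this
  · intro j hj
    rw [Finset.mem_filter] at hj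
    exact hj.2
  · intro j hj
    rw [Finset.mem_filter] at hj
    push_neg at hj
    have h2 := hj (Finset.mem_univ j)
    have h3 := hx0 j
    rw [Set.mem_Icc] at h3
    constructor
    · rcases lt_or_eq_of_le h3.1 with h | h
      · exact h
      · exact absurd h.symm h2.2
    · rcases lt_or_eq_of_le h3.2 with h | h
      · exact h
      · exact absurd h h2.1
  · intro i _
    rw [hX0 i]
    have := hnonneg i
    linarith
  · intro i hiK hiB
    rw [hX0 i]
    have hne : lam i ≠ 0 := by
      intro h
      exact hiB (Finset.mem_filter.2 ⟨hiK, h⟩)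
    have := hnonneg i
    rcases lt_or_eq_of_le this with h | h
    · linarith
    · exact absurd h.symm hne
  · exact Finset.filter_subset _ _
  · intro i hiB
    rw [Finset.mem_filter] at hiB
    rw [hY0 i, hiB.2]
    norm_num
  · intro i; exact le_refl 0
  · unfold MM
    have h1 : Phi v x0 lam x0 (fun _ => 0) ≤ (n:ℝ)/32 := by
      unfold Phi
      calc ∑ i ∈ K (n := n) lam, Yp v x0 lam x0 (fun _ => 0) i
          = ∑ i ∈ K (n := n) lam, Real.exp (-(lam i) ^ 2 / 16) := by
            apply Finset.sum_congr rfl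
            intro i _
            exact hY0 i
      _ ≤ ∑ i, Real.exp (-(lam i) ^ 2 / 16) := by
            apply Finset.sum_le_sum_of_subset_of_nonneg (Finset.subset_univ _)
            intro i _ _; positivity
      _ ≤ (n:ℝ)/32 := hsum
    have h2 : (0:ℝ) ≤ ‖x0‖ ^ 2 := by positivity
    have h3 : ((0:ℕ):ℝ)/(n:ℝ) = 0 := by norm_num
    rw [h3]
    linarith
  · unfold Xi
    have h1 : ∑ i ∈ K (n := n) lam, Real.exp ((n:ℝ) * (fun _ => (0:ℝ)) i)
        = ((K (n := n) lam).card : ℝ) := by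
      simp
    rw [h1]
    have hbase : (1:ℝ) ≤ 1 + 8/n := by
      have : (0:ℝ) ≤ 8/n := by positivity
      linarith
    have hone : ∀ k : ℕ, (1:ℝ) ≤ (1 + 8/n) ^ k := by
      intro k
      calc (1:ℝ) = (1 + 8/(n:ℝ)) ^ 0 := (pow_zero _).symm
      _ ≤ (1 + 8/n) ^ k := pow_le_pow_right₀ hbase (Nat.zero_le k)
    calc ((K (n := n) lam).card : ℝ)
        = ((K (n := n) lam).card : ℝ) * 1 := (mul_one _).symm
    _ ≤ ((K (n := n) lam).card : ℝ) * (1 + 8/n) ^ (0 + (Finset.univ.filter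
          (fun j => x0 j = 1 ∨ x0 j = -1)).card + ((K (n := n) lam).filter
          (fun i => lam i = 0)).card) := by
        apply mul_le_mul_of_nonneg_left _ (by positivity)
        exact hone _

lemma main_ind (hn : 16 ≤ n) (hv : ∀ i, ‖v i‖ = 1) (hnonneg : ∀ i, 0 ≤ lam i)
    (hsum : ∑ i, Real.exp (-(lam i) ^ 2 / 16) ≤ (n : ℝ) / 32)
    (hx0 : ∀ j, x0 j ∈ Set.Icc (-1 : ℝ) 1) :
    ∀ (mu : ℕ) (x : EuclideanSpace ℝ (Fin n)) (F : Finset (Fin n)) (B : Finset (Fin m))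
      (sg : Fin m → ℝ) (C : ℕ), Inv v x0 lam x F B sg C →
      2 * n ^ 2 + 2 * n ≤ C + F.card + B.card + mu →
      ∃ y : EuclideanSpace ℝ (Fin n),
        (∀ j, y j ∈ Set.Icc (-1 : ℝ) 1) ∧
        (∀ i, (inner ℝ (v i) (y - x0) : ℝ) ≤ 11 * lam i) ∧
        (n : ℝ) / 2 ≤ (({j : Fin n | y j = 1 ∨ y j = -1}).ncard : ℝ) := by
  intro mu
  induction mu with
  | zero =>
    intro x F B sg C hI hbound
    exfalso
    have hC : (C : ℝ) ≤ 2 * (n:ℝ) ^ 2 := cardC_le hn hI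
    have hCn : C ≤ 2 * n ^ 2 := by exact_mod_cast hC
    have hFn : F.card ≤ n := by
      calc F.card ≤ (Finset.univ : Finset (Fin n)).card := Finset.card_le_card (Finset.subset_univ _)
      _ = n := by simp
    have hB : (B.card : ℝ) ≤ (n:ℝ)/16 := cardB_le hn hI
    have hBn : 16 * B.card ≤ n := by
      have : (16 * B.card : ℝ) ≤ n := by linarith
      exact_mod_cast this
    omega
  | succ mu ih =>
    intro x F B sg C hI hbound
    by_cases hrun : 2 * F.card < n
    · obtain ⟨x', F', B', sg', C', hI', hgrow⟩ := step hn hv hnonneg hsum hI hrun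
      exact ih x' F' B' sg' C' hI' (by omega)
    · push_neg at hrun
      exact ⟨x, extract hn hv hnonneg hx0 hI hrun⟩

end Final

end DPC

/-- **Deterministic partial coloring (Theorem 1).** Given unit vectors `v 1, …, v m` in `ℝ^n`
(`n ≥ 16`), a starting point `x⁰ ∈ [-1,1]^n` and parameters `λ_1 ≥ … ≥ λ_m ≥ 0` with
`∑ i, exp(-λ_i²/16) ≤ n/32`, there is a point `x ∈ [-1,1]^n` with
`⟨v_i, x - x⁰⟩ ≤ 11 λ_i` for all `i` and at least `n/2` coordinates of `x` in `{-1,1}`. -/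
theorem stmt_0 (n m : ℕ) (hn : 16 ≤ n)
    (v : Fin m → EuclideanSpace ℝ (Fin n)) (hv : ∀ i, ‖v i‖ = 1)
    (x0 : EuclideanSpace ℝ (Fin n)) (hx0 : ∀ j, x0 j ∈ Set.Icc (-1 : ℝ) 1)
    (lam : Fin m → ℝ)
    (hmono : ∀ i j : Fin m, i ≤ j → lam j ≤ lam i)
    (hnonneg : ∀ i, 0 ≤ lam i)
    (hsum : ∑ i, Real.exp (-(lam i) ^ 2 / 16) ≤ (n : ℝ) / 32) :
    ∃ x : EuclideanSpace ℝ (Fin n),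
      (∀ j, x j ∈ Set.Icc (-1 : ℝ) 1) ∧
      (∀ i, (inner ℝ (v i) (x - x0) : ℝ) ≤ 11 * lam i) ∧
      (n : ℝ) / 2 ≤ ({j : Fin n | x j = 1 ∨ x j = -1}.ncard : ℝ) := by
  classical
  have hInit := DPC.init (v := v) hn hnonneg hsum hx0
  exact DPC.main_ind hn hv hnonneg hsum hx0 (2 * n ^ 2 + 2 * n) x0 _ _ _ 0 hInit (by omega)
end
end

section
/- Let W ∈ ℝ^{m×m} be a symmetric positive semidefinite matrix, let A_1, …, A_n ∈ ℝ^{m×m} be symmetric matrices with ‖A_i‖_op ≤ 1 for all i, and let k > 0 be a real parameter. Then there exists a linear subspace U ⊆ ℝ^n with dim(U) ≥ (1 − 1/k)·n such that for every y ∈ U with ‖y‖_2 = 1 one has W • (∑_{i=1}^n y_i A_i)² ≤ k·Tr[W]. -/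
open Matrix

/-- The `ℓ²→ ℓ²` operator norm of a real square matrix, i.e. its largest singular value. -/
noncomputable def matrixOpNorm {m : ℕ} (A : Matrix (Fin m) (Fin m) ℝ) : ℝ :=
  ‖Matrix.toEuclideanCLM (𝕜 := ℝ) (n := Fin m) A‖

/-- The Frobenius inner product `A • B = ∑_{i,j} A_{ij} B_{ij}`. -/
def frob {m : ℕ} (A B : Matrix (Fin m) (Fin m) ℝ) : ℝ :=
  ∑ i, ∑ j, A i j * B i j

lemma frob_eq_trace {m : ℕ} (A : Matrix (Fin m) (Fin m) ℝ) (hA : A.IsSymm)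
    (B : Matrix (Fin m) (Fin m) ℝ) : frob A B = (A * B).trace := by
  simp only [frob, Matrix.trace, Matrix.diag, Matrix.mul_apply]
  rw [Finset.sum_comm]
  congr 1; ext i; congr 1; ext j
  rw [← hA.apply i j]

lemma psd_trace_nonneg {m : ℕ} {C : Matrix (Fin m) (Fin m) ℝ} (hC : C.PosSemidef) :
    0 ≤ C.trace := by
  have h : ∀ i, 0 ≤ C i i := fun i => by
    exact hC.diag_nonneg
  exact Finset.sum_nonneg fun i _ => h i

open scoped MatrixOrder in
lemma psd_trace_mul_nonneg {m : ℕ} {P Q : Matrix (Fin m) (Fin m) ℝ}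
    (hP : P.PosSemidef) (hQ : Q.PosSemidef) : 0 ≤ (P * Q).trace := by
  have hs := (CFC.sqrt_nonneg P).posSemidef
  have h2 : (P * Q).trace = ((CFC.sqrt P)ᴴ * Q * CFC.sqrt P).trace := by
    conv_lhs => rw [← CFC.sqrt_mul_sqrt_self P hP.nonneg]
    rw [hs.isHermitian.eq, mul_assoc, Matrix.trace_mul_comm]
  rw [h2]
  exact psd_trace_nonneg (hQ.conjTranspose_mul_mul_same _)

lemma mulVec_sq_le {m : ℕ} (A : Matrix (Fin m) (Fin m) ℝ) (hop : matrixOpNorm A ≤ 1)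
    (x : Fin m → ℝ) : ∑ i, (A *ᵥ x) i ^ 2 ≤ ∑ i, x i ^ 2 := by
  set T := Matrix.toEuclideanCLM (𝕜 := ℝ) (n := Fin m) A
  set ξ : EuclideanSpace ℝ (Fin m) := (WithLp.equiv 2 _).symm x
  have h1 : ‖T ξ‖ ≤ ‖ξ‖ := by
    calc ‖T ξ‖ ≤ ‖T‖ * ‖ξ‖ := T.le_opNorm ξ
    _ ≤ 1 * ‖ξ‖ := by gcongr; exact hop
    _ = ‖ξ‖ := one_mul _
  have hTx : T ξ = (WithLp.equiv 2 _).symm (A *ᵥ x) := by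
    rfl
  have hnorm : ∀ v : Fin m → ℝ, ‖(WithLp.equiv 2 _).symm v‖ ^ 2 = ∑ i, v i ^ 2 := by
    intro v
    rw [EuclideanSpace.norm_eq, Real.sq_sqrt (by positivity)]
    simp [sq_abs]
  calc ∑ i, (A *ᵥ x) i ^ 2 = ‖T ξ‖ ^ 2 := by rw [hTx, hnorm]
  _ ≤ ‖ξ‖ ^ 2 := by gcongr
  _ = ∑ i, x i ^ 2 := hnorm x

lemma one_sub_sq_psd {m : ℕ} (A : Matrix (Fin m) (Fin m) ℝ) (hA : A.IsSymm)
    (hop : matrixOpNorm A ≤ 1) : (1 - A * A).PosSemidef := by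
  refine Matrix.PosSemidef.of_dotProduct_mulVec_nonneg ?_ ?_
  · simp [Matrix.IsHermitian, Matrix.conjTranspose_sub, Matrix.conjTranspose_mul,
      Matrix.conjTranspose_eq_transpose_of_trivial, hA.eq]
  · intro x
    have hx : star x = x := by simp
    rw [hx, Matrix.sub_mulVec, dotProduct_sub, Matrix.one_mulVec, ← Matrix.mulVec_mulVec]
    have h1 : x ⬝ᵥ A *ᵥ (A *ᵥ x) = (A *ᵥ x) ⬝ᵥ (A *ᵥ x) := by
      rw [Matrix.dotProduct_mulVec, ← Matrix.mulVec_transpose, hA.eq]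
    rw [h1]
    have h2 := mulVec_sq_le A hop x
    simp only [dotProduct, ← sq] at *
    linarith

/-- **Lemma 11.** For a symmetric psd matrix `W ∈ ℝ^{m×m}`, symmetric matrices
`A_1, …, A_n` with `‖A_i‖_op ≤ 1` and a parameter `k > 0`, there is a subspace `U ⊆ ℝ^n` of
dimension at least `(1 - 1/k) n` such that `W • (∑ i, y_i A_i)² ≤ k·Tr[W]` for all unit
`y ∈ U`. -/
theorem stmt_9 (m n : ℕ) (W : Matrix (Fin m) (Fin m) ℝ) (hW : W.PosSemidef)
    (A : Fin n → Matrix (Fin m) (Fin m) ℝ)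
    (hsymm : ∀ i, (A i).IsSymm) (hop : ∀ i, matrixOpNorm (A i) ≤ 1)
    (k : ℝ) (hk : 0 < k) :
    ∃ U : Submodule ℝ (Fin n → ℝ),
      (1 - 1 / k) * (n : ℝ) ≤ (Module.finrank ℝ U : ℝ) ∧
      ∀ y ∈ U, ∑ j, (y j) ^ 2 = 1 →
        frob W ((∑ i, y i • A i) ^ 2) ≤ k * W.trace := by
  classical
  have hWsymm : W.IsSymm := by
    have := hW.1
    rwa [Matrix.IsHermitian, Matrix.conjTranspose_eq_transpose_of_trivial] at this
  -- the Gram-type matrix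
  set B : Matrix (Fin n) (Fin n) ℝ :=
    Matrix.of (fun i j => (W * (A i * A j)).trace) with hBdef
  have hBapp : ∀ i j, B i j = (W * (A i * A j)).trace := fun i j => rfl
  -- symmetry of B
  have hBswap : ∀ i j : Fin n, (W * (A i * A j)).trace = (W * (A j * A i)).trace := by
    intro i j
    calc (W * (A i * A j)).trace = ((W * (A i * A j))ᵀ).trace := (Matrix.trace_transpose _).symm
    _ = ((A i * A j)ᵀ * Wᵀ).trace := by rw [Matrix.transpose_mul]
    _ = ((A j)ᵀ * (A i)ᵀ * Wᵀ).trace := by rw [Matrix.transpose_mul]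
    _ = (A j * A i * W).trace := by rw [(hsymm i).eq, (hsymm j).eq, hWsymm.eq]
    _ = (W * (A j * A i)).trace := Matrix.trace_mul_comm _ _
  have hBsym : B.IsHermitian := by
    ext i j
    simp only [Matrix.conjTranspose_apply, star_trivial, hBapp]
    exact hBswap j i
  -- the quadratic form identity
  have hquad : ∀ y : Fin n → ℝ,
      (W * ((∑ i, y i • A i) * (∑ i, y i • A i))).trace = y ⬝ᵥ B *ᵥ y := by
    intro y
    have hexp : (∑ i, y i • A i) * (∑ i, y i • A i)
        = ∑ i, ∑ j, (y i * y j) • (A i * A j) := by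
      rw [Finset.sum_mul_sum]
      exact Finset.sum_congr rfl fun i _ => Finset.sum_congr rfl fun j _ =>
        smul_mul_smul_comm (y i) (A i) (y j) (A j)
    rw [hexp]
    rw [Matrix.mul_sum, Matrix.trace_sum]
    simp only [Matrix.mul_sum, Matrix.trace_sum, mul_smul_comm, Matrix.trace_smul,
      smul_eq_mul]
    simp only [dotProduct, Matrix.mulVec, dotProduct, hBapp, Finset.mul_sum]
    refine Finset.sum_congr rfl fun i _ => Finset.sum_congr rfl fun j _ => ?_
    ring
  -- M(y) is hermitian
  have hMsymm : ∀ y : Fin n → ℝ, (∑ i, y i • A i)ᴴ = ∑ i, y i • A i := by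
    intro y
    simp [Matrix.conjTranspose_sum, Matrix.conjTranspose_smul,
      Matrix.conjTranspose_eq_transpose_of_trivial, Matrix.transpose_sum,
      Matrix.transpose_smul, (hsymm _).eq]
  -- B is positive semidefinite
  have hBpsd : B.PosSemidef := by
    refine Matrix.PosSemidef.of_dotProduct_mulVec_nonneg hBsym fun y => ?_
    have hy : star y = y := by simp
    rw [hy, ← hquad y]
    set M := ∑ i, y i • A i with hM
    calc (0:ℝ) ≤ (Mᴴ * W * M).trace := psd_trace_nonneg (hW.conjTranspose_mul_mul_same M)
    _ = ((M * W) * M).trace := by rw [hMsymm y]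
    _ = (M * (W * M)).trace := by rw [mul_assoc]
    _ = ((W * M) * M).trace := Matrix.trace_mul_comm _ _
    _ = (W * (M * M)).trace := by rw [mul_assoc]
  -- diagonal entries of B are at most Tr W
  have hdiag : ∀ i, B i i ≤ W.trace := by
    intro i
    have hp := psd_trace_mul_nonneg hW (one_sub_sq_psd (A i) (hsymm i) (hop i))
    have he : (W * (1 - A i * A i)).trace = W.trace - (W * (A i * A i)).trace := by
      rw [mul_sub, mul_one, Matrix.trace_sub]
    rw [he] at hp
    rw [hBapp]
    linarith
  set μ : Fin n → ℝ := hBsym.eigenvalues with hμ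
  set v := hBsym.eigenvectorBasis with hv
  have hμnn : ∀ i, 0 ≤ μ i := fun i => hBpsd.eigenvalues_nonneg i
  -- trace of B equals sum of eigenvalues
  have htr : B.trace = ∑ i, μ i := by
    rw [hBsym.trace_eq_sum_eigenvalues]
    simp [hμ]
  have hsum : ∑ i, μ i ≤ (n : ℝ) * W.trace := by
    rw [← htr]
    calc B.trace = ∑ i, B i i := rfl
    _ ≤ ∑ _i : Fin n, W.trace := Finset.sum_le_sum fun i _ => hdiag i
    _ = (n : ℝ) * W.trace := by
        rw [Finset.sum_const, Finset.card_univ, Fintype.card_fin, nsmul_eq_mul]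
  have hWtr : 0 ≤ W.trace := psd_trace_nonneg hW
  -- the bad set
  set T : Finset (Fin n) := Finset.univ.filter (fun i => ¬ μ i ≤ k * W.trace) with hT
  have hcard : (T.card : ℝ) * k ≤ (n : ℝ) := by
    rcases eq_or_lt_of_le hWtr with h0 | h0
    · have hTe : T = ∅ := by
        rw [hT, Finset.filter_eq_empty_iff]
        intro i _
        push_neg
        have h1 : μ i ≤ ∑ j, μ j :=
          Finset.single_le_sum (fun j _ => hμnn j) (Finset.mem_univ i)
        have h2 : (n : ℝ) * W.trace = 0 := by rw [← h0, mul_zero]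
        have h3 : k * W.trace = 0 := by rw [← h0, mul_zero]
        rw [h3]; linarith
      rw [hTe]
      simp
    · have h1 : (T.card : ℝ) * (k * W.trace) ≤ ∑ i ∈ T, μ i := by
        have := Finset.card_nsmul_le_sum T μ (k * W.trace)
          (fun i hi => le_of_lt (lt_of_not_ge (Finset.mem_filter.mp hi).2))
        rwa [nsmul_eq_mul] at this
      have h2 : ∑ i ∈ T, μ i ≤ ∑ i, μ i :=
        Finset.sum_le_sum_of_subset_of_nonneg (Finset.subset_univ T)
          (fun i _ _ => hμnn i)
      have h3 : ((T.card : ℝ) * k) * W.trace ≤ (n : ℝ) * W.trace := by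
        calc ((T.card : ℝ) * k) * W.trace = (T.card : ℝ) * (k * W.trace) := by ring
        _ ≤ ∑ i ∈ T, μ i := h1
        _ ≤ ∑ i, μ i := h2
        _ ≤ (n : ℝ) * W.trace := hsum
      exact le_of_mul_le_mul_right h3 h0
  -- the subspace
  let dotL : (Fin n → ℝ) → (Fin n → ℝ) →ₗ[ℝ] ℝ := fun w =>
    { toFun := fun y => w ⬝ᵥ y
      map_add' := fun a b => by simp [dotProduct_add]
      map_smul' := fun c a => by simp [dotProduct_smul, smul_eq_mul] }
  let f : (Fin n → ℝ) →ₗ[ℝ] (↥T → ℝ) := LinearMap.pi fun i => dotL (⇑(v i.1))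
  refine ⟨LinearMap.ker f, ?_, ?_⟩
  · -- dimension bound
    have hrk := LinearMap.finrank_range_add_finrank_ker f
    have hdom : Module.finrank ℝ (Fin n → ℝ) = n := by
      simp [Module.finrank_pi]
    have hrange : Module.finrank ℝ (LinearMap.range f) ≤ T.card := by
      calc Module.finrank ℝ (LinearMap.range f) ≤ Module.finrank ℝ (↥T → ℝ) :=
        Submodule.finrank_le _
      _ = T.card := by simp [Module.finrank_pi]
    have hTk : (T.card : ℝ) ≤ (n : ℝ) / k := (le_div_iff₀ hk).mpr hcard
    have h4 : (Module.finrank ℝ (LinearMap.range f) : ℝ)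
        + (Module.finrank ℝ (LinearMap.ker f) : ℝ) = (n : ℝ) := by
      rw [hdom] at hrk
      exact_mod_cast congrArg (Nat.cast : ℕ → ℝ) hrk
    have h5 : (Module.finrank ℝ (LinearMap.range f) : ℝ) ≤ (T.card : ℝ) := by
      exact_mod_cast hrange
    have hexp : (1 - 1/k) * (n : ℝ) = (n : ℝ) - (n : ℝ)/k := by ring
    rw [hexp]
    linarith
  · -- the quadratic form bound
    intro y hy hnorm
    have hfy : ∀ i (hi : i ∈ T), (⇑(v i) : Fin n → ℝ) ⬝ᵥ y = 0 := by
      intro i hi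
      have : f y = 0 := hy
      exact congrFun this ⟨i, hi⟩
    set c : Fin n → ℝ := fun i => (⇑(v i) : Fin n → ℝ) ⬝ᵥ y with hc
    have hc0 : ∀ i, ¬ μ i ≤ k * W.trace → c i = 0 := by
      intro i hi
      exact hfy i (Finset.mem_filter.mpr ⟨Finset.mem_univ i, hi⟩)
    set Y : EuclideanSpace ℝ (Fin n) := (WithLp.equiv 2 _).symm y with hY
    have hip : ∀ a b : EuclideanSpace ℝ (Fin n), (inner ℝ a b : ℝ) = ∑ i, a i * b i := by
      intro a b
      simp [PiLp.inner_apply, RCLike.inner_apply, starRingEnd_apply, mul_comm]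
    have hYv : ∀ i, (inner ℝ Y (v i) : ℝ) = c i := by
      intro i
      rw [hip]
      simp only [hc, dotProduct]
      exact Finset.sum_congr rfl fun j _ => mul_comm _ _
    have hvY : ∀ i, (inner ℝ (v i) Y : ℝ) = c i := by
      intro i
      rw [hip]; rfl
    -- Parseval
    have hPar : ∑ i, c i * c i = 1 := by
      have := v.sum_inner_mul_inner Y Y
      rw [hip Y Y] at this
      have h2 : ∑ i, Y i * Y i = 1 := by
        rw [← hnorm]
        refine Finset.sum_congr rfl fun j _ => ?_
        have hj : Y j = y j := rfl
        rw [sq, hj]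
      rw [h2] at this
      rw [← this]
      exact Finset.sum_congr rfl fun i _ => by rw [hYv, hvY]
    -- diagonalize the quadratic form
    have hBT : Bᵀ = B := by
      have := hBsym.eq
      rwa [Matrix.conjTranspose_eq_transpose_of_trivial] at this
    have hquad2 : y ⬝ᵥ B *ᵥ y = ∑ i, c i * (μ i * c i) := by
      set Z : EuclideanSpace ℝ (Fin n) := (WithLp.equiv 2 _).symm (B *ᵥ y) with hZ
      have h1 : y ⬝ᵥ B *ᵥ y = (inner ℝ Y Z : ℝ) := by
        rw [hip]; rfl
      have h2 := v.sum_inner_mul_inner Y Z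
      have h3 : ∀ i, (inner ℝ (v i) Z : ℝ) = μ i * c i := by
        intro i
        have e1 : (inner ℝ (v i) Z : ℝ) = (⇑(v i) : Fin n → ℝ) ⬝ᵥ (B *ᵥ y) := by
          rw [hip]; rfl
        rw [e1, Matrix.dotProduct_mulVec, ← hBT, Matrix.vecMul_transpose]
        rw [hv, hBsym.mulVec_eigenvectorBasis i, smul_dotProduct]
        rfl
      rw [h1, ← h2]
      exact Finset.sum_congr rfl fun i _ => by rw [hYv, h3]
    -- conclude
    have hfinal : ∑ i, c i * (μ i * c i) ≤ k * W.trace := by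
      have hterm : ∀ i, c i * (μ i * c i) ≤ (k * W.trace) * (c i * c i) := by
        intro i
        by_cases hi : μ i ≤ k * W.trace
        · have hcc : 0 ≤ c i * c i := mul_self_nonneg _
          calc c i * (μ i * c i) = μ i * (c i * c i) := by ring
          _ ≤ (k * W.trace) * (c i * c i) := by
              exact mul_le_mul_of_nonneg_right hi hcc
        · rw [hc0 i hi]; ring_nf
          exact le_refl 0
      calc ∑ i, c i * (μ i * c i) ≤ ∑ i, (k * W.trace) * (c i * c i) :=
        Finset.sum_le_sum fun i _ => hterm i
      _ = (k * W.trace) * ∑ i, c i * c i := by rw [Finset.mul_sum]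
      _ = k * W.trace := by rw [hPar, mul_one]
    have hsq : (∑ i, y i • A i) ^ 2 = (∑ i, y i • A i) * (∑ i, y i • A i) := sq _
    rw [hsq, frob_eq_trace W hWsymm, hquad y, hquad2]
    exact hfinal
end

section
/- Let A_1, …, A_n ∈ ℝ^{m×m} be symmetric matrices with ‖A_i‖_op ≤ 1 for all i, let c ∈ ℝ^n, and let ε, δ > 0 satisfy ε·δ·n ≤ 1. Set W := exp(ε ∑_{i=1}^n c_i A_i) (the matrix exponential). Let y ∈ ℝ^n satisfy ‖y‖_∞ ≤ 1, ∑_{i=1}^n y_i·(W • A_i) = 0, and W • (∑_{i=1}^n y_i A_i)² ≤ 16·Tr[W]. Then Tr[exp(ε ∑_{i=1}^n (c_i + δ y_i) A_i)] ≤ (1 + 16 ε² δ²)·Tr[exp(ε ∑_{i=1}^n c_i A_i)]. -/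
open Matrix

open NormedSpace Filter Matrix

set_option synthInstance.maxHeartbeats 1000000
set_option maxHeartbeats 1600000

private abbrev Mat (d : ℕ) := Matrix (Fin d) (Fin d) ℝ

variable {d : ℕ}

private lemma trace_pow_mul_comm (a b : Mat d) (n : ℕ) :
    ((a * b) ^ n).trace = ((b * a) ^ n).trace := by
  cases n with
  | zero => simp
  | succ n =>
    have hsc : a * (b * a) ^ n = (a * b) ^ n * a :=
      (SemiconjBy.pow_right (by simp [SemiconjBy, mul_assoc]) n)
    calc ((a * b) ^ (n+1)).trace = ((a * b) ^ n * a * b).trace := by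
          rw [pow_succ, mul_assoc]
      _ = (b * ((a * b) ^ n * a)).trace := (Matrix.trace_mul_comm _ _).symm
      _ = ((b * a) ^ (n+1)).trace := by rw [← hsc, pow_succ', ← mul_assoc]

private lemma trace_mul_eq_sum (a b : Mat d) :
    (a * b).trace = ∑ i, ∑ j, a i j * b j i := by
  simp [Matrix.trace, Matrix.diag, Matrix.mul_apply]

private lemma sum_sq_swap (M : Mat d) : ∑ i, ∑ j, M j i ^ 2 = ∑ i, ∑ j, M i j ^ 2 :=
  Finset.sum_comm

private lemma baseA (M : Mat d) : (M ^ 2).trace ≤ (Mᵀ * M).trace := by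
  rw [pow_two, trace_mul_eq_sum, trace_mul_eq_sum]
  have htr : ∑ i, ∑ j, Mᵀ i j * M j i = ∑ i, ∑ j, M j i ^ 2 := by
    apply Finset.sum_congr rfl; intros; apply Finset.sum_congr rfl; intros
    rw [Matrix.transpose_apply]; ring
  rw [htr]
  have h2 : (2:ℝ) * (∑ i, ∑ j, M i j * M j i) ≤
      (∑ i, ∑ j, M i j ^ 2) + (∑ i, ∑ j, M j i ^ 2) := by
    rw [← Finset.sum_add_distrib, Finset.mul_sum]
    apply Finset.sum_le_sum; intro i _
    rw [← Finset.sum_add_distrib, Finset.mul_sum]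
    apply Finset.sum_le_sum; intro j _
    nlinarith [sq_nonneg (M i j - M j i)]
  linarith [sum_sq_swap M]

private lemma baseB (P Q : Mat d) (hP : P.IsSymm) (hQ : Q.IsSymm) :
    (P * Q).trace ≤ (P ^ 2).trace / 2 + (Q ^ 2).trace / 2 := by
  rw [pow_two, pow_two, trace_mul_eq_sum, trace_mul_eq_sum, trace_mul_eq_sum]
  have e1 : ∑ i, ∑ j, P i j * P j i = ∑ i, ∑ j, P i j ^ 2 := by
    apply Finset.sum_congr rfl; intros; apply Finset.sum_congr rfl; intros
    rw [hP.apply]; ring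
  have e2 : ∑ i, ∑ j, Q i j * Q j i = ∑ i, ∑ j, Q j i ^ 2 := by
    apply Finset.sum_congr rfl; intros; apply Finset.sum_congr rfl; intros
    rw [hQ.apply]; ring
  rw [e1, e2]
  have h2 : (2:ℝ) * (∑ i, ∑ j, P i j * Q j i) ≤
      (∑ i, ∑ j, P i j ^ 2) + (∑ i, ∑ j, Q j i ^ 2) := by
    rw [← Finset.sum_add_distrib, Finset.mul_sum]
    apply Finset.sum_le_sum; intro i _
    rw [← Finset.sum_add_distrib, Finset.mul_sum]
    apply Finset.sum_le_sum; intro j _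
    nlinarith [sq_nonneg (P i j - Q j i)]
  linarith

private lemma isSymm_transpose_mul (M : Mat d) : (Mᵀ * M).IsSymm := by
  unfold Matrix.IsSymm; rw [Matrix.transpose_mul, Matrix.transpose_transpose]

private lemma isSymm_mul_transpose (M : Mat d) : (M * Mᵀ).IsSymm := by
  unfold Matrix.IsSymm; rw [Matrix.transpose_mul, Matrix.transpose_transpose]

private lemma keyAB (d : ℕ) : ∀ k : ℕ,
    (∀ M : Mat d, (M ^ (2 ^ (k+1))).trace ≤ ((Mᵀ * M) ^ (2 ^ k)).trace) ∧
    (∀ P Q : Mat d, P.IsSymm → Q.IsSymm →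
      ((P * Q) ^ (2 ^ k)).trace ≤ (P ^ (2 ^ (k+1))).trace / 2 + (Q ^ (2 ^ (k+1))).trace / 2) := by
  intro k
  induction k with
  | zero =>
    constructor
    · intro M; simpa [pow_one] using baseA M
    · intro P Q hP hQ; simpa [pow_one] using baseB P Q hP hQ
  | succ k ih =>
    obtain ⟨ihA, ihB⟩ := ih
    have pow2 : ∀ (N : Mat d) (j : ℕ), N ^ (2 ^ (j+1)) = (N ^ 2) ^ (2 ^ j) := by
      intro N j; rw [← pow_mul]; ring_nf
    constructor
    · intro M
      have h1 : (M ^ (2 ^ (k+2))).trace ≤ (((M ^ 2)ᵀ * M ^ 2) ^ (2 ^ k)).trace := by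
        have := ihA (M ^ 2)
        rwa [← pow2 M (k+1)] at this
      have h2 : (((M ^ 2)ᵀ * M ^ 2) ^ (2 ^ k)).trace
          = (((Mᵀ * M) * (M * Mᵀ)) ^ (2 ^ k)).trace := by
        have e : (M ^ 2)ᵀ * M ^ 2 = Mᵀ * (Mᵀ * M * M) := by
          rw [pow_two, Matrix.transpose_mul]; noncomm_ring
        rw [e, trace_pow_mul_comm]
        congr 2
        noncomm_ring
      have h3 := ihB (Mᵀ * M) (M * Mᵀ) (isSymm_transpose_mul M) (isSymm_mul_transpose M)
      have h4 : ((M * Mᵀ) ^ (2 ^ (k+1))).trace = ((Mᵀ * M) ^ (2 ^ (k+1))).trace :=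
        trace_pow_mul_comm M Mᵀ _
      calc (M ^ (2 ^ (k+2))).trace ≤ (((Mᵀ * M) * (M * Mᵀ)) ^ (2 ^ k)).trace := h2 ▸ h1
        _ ≤ ((Mᵀ * M) ^ (2 ^ (k+1))).trace / 2 + ((M * Mᵀ) ^ (2 ^ (k+1))).trace / 2 := h3
        _ = ((Mᵀ * M) ^ (2 ^ (k+1))).trace := by rw [h4]; ring
    · intro P Q hP hQ
      have h1 : ((P * Q) ^ (2 ^ (k+1))).trace ≤ (((P * Q)ᵀ * (P * Q)) ^ (2 ^ k)).trace :=
        ihA (P * Q)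
      have h2 : (((P * Q)ᵀ * (P * Q)) ^ (2 ^ k)).trace = ((P ^ 2 * Q ^ 2) ^ (2 ^ k)).trace := by
        have e : (P * Q)ᵀ * (P * Q) = Q * (P * P * Q) := by
          rw [Matrix.transpose_mul, hP, hQ]; noncomm_ring
        rw [e, trace_pow_mul_comm]
        congr 2
        rw [pow_two, pow_two]; noncomm_ring
      have h3 := ihB (P ^ 2) (Q ^ 2) (hP.pow 2) (hQ.pow 2)
      rw [← pow2 P (k+1), ← pow2 Q (k+1)] at h3
      calc ((P * Q) ^ (2 ^ (k+1))).trace ≤ ((P ^ 2 * Q ^ 2) ^ (2 ^ k)).trace := h2 ▸ h1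
        _ ≤ (P ^ (2 ^ (k+2))).trace / 2 + (Q ^ (2 ^ (k+2))).trace / 2 := h3

section BanachExp
variable {𝔸 : Type*} [NormedRing 𝔸] [NormedAlgebra ℝ 𝔸] [CompleteSpace 𝔸] [NormOneClass 𝔸]

private lemma expTermNorm (U : 𝔸) (n : ℕ) :
    ‖(n.factorial : ℝ)⁻¹ • U ^ n‖ ≤ ‖U‖ ^ n / n.factorial := by
  rw [norm_smul, norm_inv, Real.norm_natCast, div_eq_inv_mul]
  exact mul_le_mul_of_nonneg_left (norm_pow_le U n) (by positivity)

private lemma summable_norm_expTerm (U : 𝔸) :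
    Summable fun n => ‖(n.factorial : ℝ)⁻¹ • U ^ n‖ :=
  Summable.of_nonneg_of_le (fun _ => norm_nonneg _) (expTermNorm U)
    (Real.summable_pow_div_factorial ‖U‖)

private lemma exp_eq_tsum_smul (U : 𝔸) : exp U = ∑' n : ℕ, (n.factorial : ℝ)⁻¹ • U ^ n := by
  rw [exp_eq_tsum ℝ]

private lemma norm_exp_le_exp_norm (U : 𝔸) : ‖exp U‖ ≤ Real.exp ‖U‖ := by
  rw [exp_eq_tsum_smul]
  calc ‖∑' n : ℕ, (n.factorial : ℝ)⁻¹ • U ^ n‖ ≤ ∑' n : ℕ, ‖(n.factorial : ℝ)⁻¹ • U ^ n‖ :=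
        norm_tsum_le_tsum_norm (summable_norm_expTerm U)
    _ ≤ ∑' n : ℕ, ‖U‖ ^ n / n.factorial := by
        exact Summable.tsum_le_tsum (expTermNorm U) (summable_norm_expTerm U)
          (Real.summable_pow_div_factorial ‖U‖)
    _ = Real.exp ‖U‖ := by
        rw [Real.exp_eq_exp_ℝ, exp_eq_tsum_div]

private lemma antidiag_pow (u v : ℝ) (n : ℕ) :
    ∑ kl ∈ Finset.HasAntidiagonal.antidiagonal n, u ^ kl.1 / kl.1.factorial * (v ^ kl.2 / kl.2.factorial)
      = (u + v) ^ n / n.factorial := by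
  rw [Finset.Nat.sum_antidiagonal_eq_sum_range_succ
    (fun a b => u ^ a / a.factorial * (v ^ b / b.factorial)), add_pow, Finset.sum_div]
  apply Finset.sum_congr rfl
  intro k hk
  have hkn : k ≤ n := Nat.lt_succ_iff.mp (Finset.mem_range.mp hk)
  rw [Nat.cast_choose ℝ hkn]
  have h1 : (k.factorial : ℝ) ≠ 0 := Nat.cast_ne_zero.mpr k.factorial_ne_zero
  have h2 : ((n - k).factorial : ℝ) ≠ 0 := Nat.cast_ne_zero.mpr (n - k).factorial_ne_zero
  have h3 : (n.factorial : ℝ) ≠ 0 := Nat.cast_ne_zero.mpr n.factorial_ne_zero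
  field_simp

private lemma factorial_two_le (n : ℕ) : (n.factorial : ℝ) * 2 ≤ (n + 2).factorial := by
  have : n.factorial * 2 ≤ (n + 2).factorial := by
    calc n.factorial * 2 ≤ n.factorial * ((n + 1) * (n + 2)) := by
          apply Nat.mul_le_mul_left
          nlinarith [Nat.zero_le n]
      _ = (n + 2).factorial := by
          rw [Nat.factorial_succ (n + 1), Nat.factorial_succ n]; ring
  exact_mod_cast this

private lemma tail_bound (s : ℝ) (hs : 0 ≤ s) :
    ∑' n : ℕ, s ^ (n + 2) / (n + 2).factorial ≤ s ^ 2 / 2 * Real.exp s := by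
  have hsum : Summable fun n : ℕ => s ^ n / n.factorial := Real.summable_pow_div_factorial s
  have hterm : ∀ n : ℕ, s ^ (n + 2) / (n + 2).factorial ≤ s ^ 2 / 2 * (s ^ n / n.factorial) := by
    intro n
    have hf := factorial_two_le n
    have h3 : (0:ℝ) < n.factorial := by positivity
    have h4 : s ^ (n + 2) / ((n + 2).factorial : ℝ) ≤ s ^ (n + 2) / ((n.factorial : ℝ) * 2) :=
      div_le_div_of_nonneg_left (by positivity) (by positivity) hf
    have h5 : s ^ (n + 2) / ((n.factorial : ℝ) * 2) = s ^ 2 / 2 * (s ^ n / n.factorial) := by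
      field_simp; ring
    linarith
  have hsum2 : Summable fun n : ℕ => s ^ (n + 2) / (n + 2).factorial :=
    (summable_nat_add_iff 2).mpr hsum
  calc ∑' n : ℕ, s ^ (n + 2) / (n + 2).factorial
      ≤ ∑' n : ℕ, s ^ 2 / 2 * (s ^ n / n.factorial) :=
        Summable.tsum_le_tsum hterm hsum2 (hsum.mul_left _)
    _ = s ^ 2 / 2 * ∑' n : ℕ, s ^ n / n.factorial := (hsum.tsum_mul_left _)
    _ = s ^ 2 / 2 * Real.exp s := by rw [Real.exp_eq_exp_ℝ, exp_eq_tsum_div]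

private lemma exp_mul_exp_sub_exp_add (U V : 𝔸) :
    ‖exp U * exp V - exp (U + V)‖ ≤ (‖U‖ + ‖V‖) ^ 2 * Real.exp (‖U‖ + ‖V‖) := by
  set u := ‖U‖ with hu
  set v := ‖V‖ with hv
  set s := u + v with hs
  have hu0 : 0 ≤ u := norm_nonneg _
  have hv0 : 0 ≤ v := norm_nonneg _
  have hs0 : 0 ≤ s := by positivity
  set f : ℕ → 𝔸 := fun n => (n.factorial : ℝ)⁻¹ • U ^ n with hf
  set g : ℕ → 𝔸 := fun n => (n.factorial : ℝ)⁻¹ • V ^ n with hg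
  set c : ℕ → 𝔸 := fun n => ∑ kl ∈ Finset.HasAntidiagonal.antidiagonal n, f kl.1 * g kl.2 with hc
  set dd : ℕ → 𝔸 := fun n => (n.factorial : ℝ)⁻¹ • (U + V) ^ n with hdd
  have hfn : Summable fun n => ‖f n‖ := summable_norm_expTerm U
  have hgn : Summable fun n => ‖g n‖ := summable_norm_expTerm V
  have hprod : exp U * exp V = ∑' n : ℕ, c n := by
    rw [exp_eq_tsum_smul, exp_eq_tsum_smul]
    exact tsum_mul_tsum_eq_tsum_sum_antidiagonal_of_summable_norm hfn hgn
  have hcb : ∀ n, ‖c n‖ ≤ s ^ n / n.factorial := by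
    intro n
    calc ‖c n‖ ≤ ∑ kl ∈ Finset.HasAntidiagonal.antidiagonal n, ‖f kl.1 * g kl.2‖ := norm_sum_le _ _
      _ ≤ ∑ kl ∈ Finset.HasAntidiagonal.antidiagonal n,
            u ^ kl.1 / kl.1.factorial * (v ^ kl.2 / kl.2.factorial) := by
          apply Finset.sum_le_sum
          intro kl _
          calc ‖f kl.1 * g kl.2‖ ≤ ‖f kl.1‖ * ‖g kl.2‖ := norm_mul_le _ _
            _ ≤ u ^ kl.1 / kl.1.factorial * (v ^ kl.2 / kl.2.factorial) :=
              mul_le_mul (expTermNorm U kl.1) (expTermNorm V kl.2) (norm_nonneg _)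
                (by positivity)
      _ = s ^ n / n.factorial := antidiag_pow u v n
  have hdb : ∀ n, ‖dd n‖ ≤ s ^ n / n.factorial := by
    intro n
    calc ‖dd n‖ ≤ ‖U + V‖ ^ n / n.factorial := expTermNorm _ n
      _ ≤ s ^ n / n.factorial := by
          have hp : ‖U + V‖ ^ n ≤ s ^ n := pow_le_pow_left₀ (norm_nonneg _) (norm_add_le U V) n
          have hq : (0:ℝ) < n.factorial := by positivity
          gcongr
  have hsum_s : Summable fun n : ℕ => s ^ n / n.factorial := Real.summable_pow_div_factorial s
  have hsc : Summable c := Summable.of_norm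
    (Summable.of_nonneg_of_le (fun _ => norm_nonneg _) hcb hsum_s)
  have hsd : Summable dd := Summable.of_norm
    (Summable.of_nonneg_of_le (fun _ => norm_nonneg _) hdb hsum_s)
  have hdiff : exp U * exp V - exp (U + V) = ∑' n : ℕ, (c n - dd n) := by
    rw [hprod, exp_eq_tsum_smul, ← Summable.tsum_sub hsc hsd]
  have hc0 : c 0 - dd 0 = 0 := by
    simp [hc, hdd, hf, hg]
  have hc1 : c 1 - dd 1 = 0 := by
    have e1 : c 1 = ∑ kl ∈ Finset.HasAntidiagonal.antidiagonal 1, f kl.1 * g kl.2 := rfl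
    rw [e1, Finset.Nat.sum_antidiagonal_eq_sum_range_succ (fun a b => f a * g b) 1]
    have e2 : dd 1 = U + V := by simp [hdd]
    rw [e2]
    simp [Finset.sum_range_succ, hf, hg]
    abel
  have hshift : Summable (fun n => c n - dd n) := hsc.sub hsd
  have key : ∑' n : ℕ, (c n - dd n) = ∑' n : ℕ, (c (n + 2) - dd (n + 2)) := by
    rw [Summable.tsum_eq_zero_add hshift, Summable.tsum_eq_zero_add ((summable_nat_add_iff 1).mpr hshift)]
    simp only [hc0, hc1]
    simp
  have hsum_tail : Summable fun n : ℕ => 2 * (s ^ (n + 2) / (n + 2).factorial) :=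
    (((summable_nat_add_iff 2).mpr hsum_s).mul_left 2)
  have hbound : ‖∑' n : ℕ, (c (n + 2) - dd (n + 2))‖
      ≤ ∑' n : ℕ, 2 * (s ^ (n + 2) / (n + 2).factorial) := by
    have hsn : Summable fun n => ‖c (n + 2) - dd (n + 2)‖ := by
      apply Summable.of_nonneg_of_le (fun _ => norm_nonneg _) _ hsum_tail
      intro n
      calc ‖c (n + 2) - dd (n + 2)‖ ≤ ‖c (n + 2)‖ + ‖dd (n + 2)‖ := norm_sub_le _ _
        _ ≤ 2 * (s ^ (n + 2) / (n + 2).factorial) := by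
            have := hcb (n + 2); have := hdb (n + 2); linarith [hcb (n + 2), hdb (n + 2)]
    calc ‖∑' n : ℕ, (c (n + 2) - dd (n + 2))‖ ≤ ∑' n : ℕ, ‖c (n + 2) - dd (n + 2)‖ :=
        norm_tsum_le_tsum_norm hsn
      _ ≤ ∑' n : ℕ, 2 * (s ^ (n + 2) / (n + 2).factorial) := by
          apply Summable.tsum_le_tsum _ hsn hsum_tail
          intro n
          calc ‖c (n + 2) - dd (n + 2)‖ ≤ ‖c (n + 2)‖ + ‖dd (n + 2)‖ := norm_sub_le _ _
            _ ≤ 2 * (s ^ (n + 2) / (n + 2).factorial) := by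
                linarith [hcb (n + 2), hdb (n + 2)]
  have htail := tail_bound s hs0
  have htail2 : ∑' n : ℕ, 2 * (s ^ (n + 2) / (n + 2).factorial) ≤ s ^ 2 * Real.exp s := by
    rw [((summable_nat_add_iff 2).mpr hsum_s).tsum_mul_left 2]
    linarith
  calc ‖exp U * exp V - exp (U + V)‖ = ‖∑' n : ℕ, (c (n + 2) - dd (n + 2))‖ := by
        rw [hdiff, key]
    _ ≤ ∑' n : ℕ, 2 * (s ^ (n + 2) / (n + 2).factorial) := hbound
    _ ≤ s ^ 2 * Real.exp s := htail2

private lemma pow_sub_pow_norm_le (a b : 𝔸) (K : ℝ) (hK : 1 ≤ K) (ha : ‖a‖ ≤ K) (hb : ‖b‖ ≤ K) :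
    ∀ n : ℕ, ‖a ^ n - b ^ n‖ ≤ n * K ^ n * ‖a - b‖ := by
  have hK0 : 0 ≤ K := le_trans zero_le_one hK
  intro n
  induction n with
  | zero => simp
  | succ n ih =>
    have h1 : a ^ (n+1) - b ^ (n+1) = a ^ n * (a - b) + (a ^ n - b ^ n) * b := by
      noncomm_ring
    have han : ‖a ^ n‖ ≤ K ^ n := le_trans (norm_pow_le a n)
      (pow_le_pow_left₀ (norm_nonneg _) ha n)
    have h2 : K ^ n ≤ K ^ (n + 1) :=
      pow_le_pow_right₀ hK (Nat.le_succ n)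
    have h3 : (0:ℝ) ≤ ‖a - b‖ := norm_nonneg _
    have t1 : ‖a ^ n‖ * ‖a - b‖ ≤ K ^ (n+1) * ‖a - b‖ :=
      mul_le_mul_of_nonneg_right (han.trans h2) h3
    have t2 : ‖a ^ n - b ^ n‖ * ‖b‖ ≤ n * K ^ n * ‖a - b‖ * K :=
      mul_le_mul ih hb (norm_nonneg _) (by positivity)
    have t3 : (n:ℝ) * K ^ n * ‖a - b‖ * K = n * K ^ (n+1) * ‖a - b‖ := by ring
    calc ‖a ^ (n+1) - b ^ (n+1)‖ ≤ ‖a ^ n * (a - b)‖ + ‖(a ^ n - b ^ n) * b‖ := by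
          rw [h1]; exact norm_add_le _ _
      _ ≤ ‖a ^ n‖ * ‖a - b‖ + ‖a ^ n - b ^ n‖ * ‖b‖ :=
          add_le_add (norm_mul_le _ _) (norm_mul_le _ _)
      _ ≤ (n + 1 : ℕ) * K ^ (n + 1) * ‖a - b‖ := by
          push_cast
          nlinarith [t1, t2, t3]

end BanachExp

private lemma half_inv_pow (k : ℕ) : ((2:ℝ)^(k+1))⁻¹ + ((2:ℝ)^(k+1))⁻¹ = ((2:ℝ)^k)⁻¹ := by
  rw [pow_succ]
  field_simp
  ring

private lemma exp_half_sq (X : Mat d) (k : ℕ) :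
    exp (((2:ℝ)^(k+1))⁻¹ • X) * exp (((2:ℝ)^(k+1))⁻¹ • X)
      = exp (((2:ℝ)^k)⁻¹ • X) := by
  rw [← Matrix.exp_add_of_commute _ _ (Commute.refl _), ← add_smul, half_inv_pow]

private lemma gt_antitone (X B : Mat d) (hX : X.IsSymm) (hB : B.IsSymm) (k : ℕ) :
    ((exp (((2:ℝ)^(k+1))⁻¹ • X) * exp (((2:ℝ)^(k+1))⁻¹ • B)) ^ 2^(k+1)).trace ≤
    ((exp (((2:ℝ)^k)⁻¹ • X) * exp (((2:ℝ)^k)⁻¹ • B)) ^ 2^k).trace := by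
  set C := exp (((2:ℝ)^(k+1))⁻¹ • X) with hC
  set D := exp (((2:ℝ)^(k+1))⁻¹ • B) with hD
  have hCs : C.IsSymm := Matrix.IsSymm.exp (hX.smul _)
  have hDs : D.IsSymm := Matrix.IsSymm.exp (hB.smul _)
  have key := (keyAB d k).1 (C * D)
  have e1 : (C * D)ᵀ * (C * D) = D * (C * C * D) := by
    rw [Matrix.transpose_mul, hCs, hDs]; noncomm_ring
  have e2 : ((D * (C * C * D)) ^ 2^k).trace = (((C * C) * (D * D)) ^ 2^k).trace := by
    rw [trace_pow_mul_comm]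
    congr 2
    noncomm_ring
  have e3 : (C * C) * (D * D) = exp (((2:ℝ)^k)⁻¹ • X) * exp (((2:ℝ)^k)⁻¹ • B) := by
    rw [hC, hD, exp_half_sq, exp_half_sq]
  calc ((C * D) ^ 2^(k+1)).trace ≤ (((C * D)ᵀ * (C * D)) ^ 2^k).trace := key
    _ = ((D * (C * C * D)) ^ 2^k).trace := by rw [e1]
    _ = (((C * C) * (D * D)) ^ 2^k).trace := e2
    _ = _ := by rw [e3]

private lemma trace_zero_of_d_zero (hd : d = 0) (Z : Mat d) : Z.trace = 0 := by
  subst hd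
  simp [Matrix.trace]

private lemma trotter (X B : Mat d) :
    Tendsto (fun k : ℕ =>
        ((exp (((2:ℝ)^k)⁻¹ • X) * exp (((2:ℝ)^k)⁻¹ • B)) ^ 2^k).trace)
      atTop (nhds ((exp (X + B)).trace)) := by
  rcases Nat.eq_zero_or_pos d with hd | hd
  · have h1 : ∀ Z : Mat d, Z.trace = 0 := trace_zero_of_d_zero hd
    simp only [h1]
    exact tendsto_const_nhds
  letI : SeminormedRing (Mat d) := Matrix.linftyOpSemiNormedRing
  letI : NormedRing (Mat d) := Matrix.linftyOpNormedRing
  letI : NormedAlgebra ℝ (Mat d) := Matrix.linftyOpNormedAlgebra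
  haveI : Nonempty (Fin d) := Fin.pos_iff_nonempty.mp hd
  letI : NormOneClass (Mat d) := Matrix.linfty_opNormOneClass
  -- entry bound
  have hentry : ∀ (Z : Mat d) (i : Fin d), |Z i i| ≤ ‖Z‖ := by
    intro Z i
    rw [Matrix.linfty_opNorm_def]
    have h1 : ‖Z i i‖₊ ≤ ∑ j, ‖Z i j‖₊ :=
      Finset.single_le_sum (f := fun j => ‖Z i j‖₊) (fun _ _ => by positivity) (Finset.mem_univ i)
    have h2 : (∑ j, ‖Z i j‖₊) ≤ Finset.univ.sup (fun i => ∑ j, ‖Z i j‖₊) :=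
      Finset.le_sup (f := fun i => ∑ j, ‖Z i j‖₊) (Finset.mem_univ i)
    have := NNReal.coe_le_coe.mpr (h1.trans h2)
    simpa [← Real.norm_eq_abs, coe_nnnorm] using this
  have htrace : ∀ Z : Mat d, |Z.trace| ≤ d * ‖Z‖ := by
    intro Z
    calc |Z.trace| ≤ ∑ i, |Z i i| := Finset.abs_sum_le_sum_abs _ _
      _ ≤ ∑ _i : Fin d, ‖Z‖ := Finset.sum_le_sum (fun i _ => hentry Z i)
      _ = d * ‖Z‖ := by rw [Finset.sum_const, Finset.card_univ, Fintype.card_fin,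
            nsmul_eq_mul]
  set x := ‖X‖ with hx
  set y := ‖B‖ with hy
  set s := x + y with hs
  have hx0 : 0 ≤ x := norm_nonneg _
  have hy0 : 0 ≤ y := norm_nonneg _
  have hs0 : 0 ≤ s := by positivity
  set T := exp (X + B) with hT
  have key : ∀ k : ℕ,
      |((exp (((2:ℝ)^k)⁻¹ • X) * exp (((2:ℝ)^k)⁻¹ • B)) ^ 2^k).trace - T.trace|
        ≤ ((2:ℝ)^k)⁻¹ * (d * (s^2 * Real.exp (2*s))) := by
    intro k
    set t := ((2:ℝ)^k)⁻¹ with ht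
    have ht0 : 0 < t := by positivity
    have ht1 : t ≤ 1 := by
      rw [ht]
      rw [inv_le_one_iff₀]
      right
      exact one_le_pow₀ (by norm_num)
    set a := exp (t • X) * exp (t • B) with ha
    set b := exp (t • (X + B)) with hb
    have hnormU : ‖t • X‖ = t * x := by rw [norm_smul, Real.norm_eq_abs, abs_of_pos ht0]
    have hnormV : ‖t • B‖ = t * y := by rw [norm_smul, Real.norm_eq_abs, abs_of_pos ht0]
    have hbpow : b ^ (2^k) = T := by
      rw [hb, ← Matrix.exp_nsmul, ← Nat.cast_smul_eq_nsmul ℝ, smul_smul]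
      congr 1
      push_cast
      rw [mul_inv_cancel₀ (by positivity), one_smul]
    have herr : ‖a - b‖ ≤ t^2 * (s^2 * Real.exp s) := by
      have h1 := exp_mul_exp_sub_exp_add (t • X) (t • B)
      rw [← smul_add] at h1
      rw [hnormU, hnormV] at h1
      have e : t * x + t * y = t * s := by rw [hs]; ring
      rw [e] at h1
      calc ‖a - b‖ ≤ (t * s)^2 * Real.exp (t * s) := h1
        _ ≤ (t * s)^2 * Real.exp s := by
            gcongr
            nlinarith
        _ = t^2 * (s^2 * Real.exp s) := by ring
    set K := Real.exp (t * s) with hK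
    have hK1 : 1 ≤ K := Real.one_le_exp (by positivity)
    have hanorm : ‖a‖ ≤ K := by
      calc ‖a‖ ≤ ‖exp (t • X)‖ * ‖exp (t • B)‖ := norm_mul_le _ _
        _ ≤ Real.exp (t * x) * Real.exp (t * y) := by
            have := norm_exp_le_exp_norm (t • X)
            have := norm_exp_le_exp_norm (t • B)
            rw [hnormU] at *
            rw [hnormV] at *
            exact mul_le_mul (by assumption) (by assumption) (norm_nonneg _)
              (Real.exp_nonneg _)
        _ = K := by rw [hK, ← Real.exp_add]; congr 1; rw [hs]; ring
    have hbnorm : ‖b‖ ≤ K := by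
      calc ‖b‖ ≤ Real.exp ‖t • (X + B)‖ := norm_exp_le_exp_norm _
        _ ≤ K := by
            apply Real.exp_le_exp.mpr
            rw [norm_smul, Real.norm_eq_abs, abs_of_pos ht0]
            have : ‖X + B‖ ≤ s := norm_add_le X B
            nlinarith
    have hKpow : K ^ (2^k) = Real.exp s := by
      rw [hK, ← Real.exp_nat_mul]
      congr 1
      push_cast
      rw [ht]
      field_simp
    have hpow := pow_sub_pow_norm_le a b K hK1 hanorm hbnorm (2^k)
    rw [hKpow, hbpow] at hpow
    have hN : ((2^k : ℕ) : ℝ) = (2:ℝ)^k := by push_cast; ring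
    have htr := htrace (a ^ 2^k - T)
    rw [Matrix.trace_sub] at htr
    calc |(a ^ 2^k).trace - T.trace| ≤ d * ‖a ^ 2^k - T‖ := htr
      _ ≤ d * ((2^k : ℕ) * Real.exp s * ‖a - b‖) :=
          mul_le_mul_of_nonneg_left hpow (by positivity)
      _ ≤ d * ((2:ℝ)^k * Real.exp s * (t^2 * (s^2 * Real.exp s))) := by
          rw [hN]
          gcongr
      _ = t * (d * (s^2 * Real.exp (2*s))) := by
          have he : Real.exp (2*s) = Real.exp s * Real.exp s := by
            rw [← Real.exp_add]; ring_nf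
          rw [he, ht]
          have h2k : ((2:ℝ)^k) ≠ 0 := by positivity
          field_simp
      _ = ((2:ℝ)^k)⁻¹ * (d * (s^2 * Real.exp (2*s))) := by rw [ht]
  -- conclude tendsto
  have hb0 : Tendsto (fun k : ℕ => ((2:ℝ)^k)⁻¹ * (d * (s^2 * Real.exp (2*s)))) atTop (nhds 0) := by
    have h1 : Tendsto (fun k : ℕ => ((2:ℝ)⁻¹)^k) atTop (nhds 0) :=
      tendsto_pow_atTop_nhds_zero_of_lt_one (by norm_num) (by norm_num)
    have h2 : (fun k : ℕ => ((2:ℝ)^k)⁻¹ * (d * (s^2 * Real.exp (2*s))))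
        = fun k : ℕ => ((2:ℝ)⁻¹)^k * (d * (s^2 * Real.exp (2*s))) := by
      funext k; rw [inv_pow]
    rw [h2]
    simpa using h1.mul_const (d * (s^2 * Real.exp (2*s)))
  rw [← tendsto_sub_nhds_zero_iff]
  apply squeeze_zero_norm _ hb0
  intro k
  exact key k

private lemma golden_thompson (X B : Mat d) (hX : X.IsSymm) (hB : B.IsSymm) :
    (exp (X + B)).trace ≤ (exp X * exp B).trace := by
  have hmono : ∀ k : ℕ,
      ((exp (((2:ℝ)^k)⁻¹ • X) * exp (((2:ℝ)^k)⁻¹ • B)) ^ 2^k).trace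
        ≤ ((exp (((2:ℝ)^0)⁻¹ • X) * exp (((2:ℝ)^0)⁻¹ • B)) ^ 2^0).trace := by
    intro k
    induction k with
    | zero => exact le_refl _
    | succ k ih => exact le_trans (gt_antitone X B hX hB k) ih
  have h := le_of_tendsto' (trotter X B) hmono
  simpa [pow_zero, inv_one, one_smul, pow_one] using h

private lemma exp_le_one_add_sq {t : ℝ} (h : |t| ≤ 1) : Real.exp t ≤ 1 + t + t * t := by
  have hb := Real.exp_bound h (n := 3) (by norm_num)
  have hsum : ∑ m ∈ Finset.range 3, t^m / m.factorial = 1 + t + t^2/2 := by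
    norm_num [Finset.sum_range_succ]
  rw [hsum] at hb
  have h3 : |t|^3 ≤ t^2 := by
    have e : |t|^3 = |t| * t^2 := by rw [pow_succ, sq_abs]; ring
    rw [e]
    nlinarith [abs_nonneg t, sq_nonneg t]
  have h4 := abs_le.mp hb
  norm_num [Nat.factorial] at h4
  nlinarith [h4.2]

private lemma frob_eq_trace_s11 (W A : Mat d) : frob W A = (W * Aᵀ).trace := by
  rw [trace_mul_eq_sum, frob]
  apply Finset.sum_congr rfl; intros; apply Finset.sum_congr rfl; intros
  rw [Matrix.transpose_apply]

private lemma matrixOpNorm_nonneg (A : Mat d) : 0 ≤ matrixOpNorm A :=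
  norm_nonneg _

private lemma matrixOpNorm_smul (c : ℝ) (A : Mat d) :
    matrixOpNorm (c • A) = |c| * matrixOpNorm A := by
  unfold matrixOpNorm
  rw [_root_.map_smul]
  rw [norm_smul c (Matrix.toEuclideanCLM (𝕜 := ℝ) A), Real.norm_eq_abs]

private lemma matrixOpNorm_sum_le {ι : Type*} (s : Finset ι) (f : ι → Mat d) :
    matrixOpNorm (∑ i ∈ s, f i) ≤ ∑ i ∈ s, matrixOpNorm (f i) := by
  unfold matrixOpNorm
  rw [map_sum]
  exact norm_sum_le _ _

private lemma eig_abs_le (S : Mat d) (hS : S.IsHermitian) (i : Fin d) :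
    |hS.eigenvalues i| ≤ matrixOpNorm S := by
  set v := hS.eigenvectorBasis i with hv
  have hv1 : ‖v‖ = 1 := hS.eigenvectorBasis.orthonormal.1 i
  have happ : Matrix.toEuclideanCLM (𝕜 := ℝ) S v = hS.eigenvalues i • v := by
    apply WithLp.ofLp_injective
    rw [Matrix.ofLp_toEuclideanCLM, WithLp.ofLp_smul]
    exact hS.mulVec_eigenvectorBasis i
  have h2 : ‖Matrix.toEuclideanCLM (𝕜 := ℝ) S v‖ = |hS.eigenvalues i| := by
    rw [happ, norm_smul, Real.norm_eq_abs, hv1, mul_one]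
  calc |hS.eigenvalues i| = ‖Matrix.toEuclideanCLM (𝕜 := ℝ) S v‖ := h2.symm
    _ ≤ ‖Matrix.toEuclideanCLM (𝕜 := ℝ) S‖ * ‖v‖ := ContinuousLinearMap.le_opNorm _ _
    _ = matrixOpNorm S := by rw [hv1, mul_one, matrixOpNorm]

private lemma psd_diag_nonneg {M : Mat d} (h : M.PosSemidef) (i : Fin d) : 0 ≤ M i i := by
  exact h.diag_nonneg

private lemma psd_trace_nonneg_s11 {M : Mat d} (h : M.PosSemidef) : 0 ≤ M.trace := by
  apply Finset.sum_nonneg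
  intro i _
  exact psd_diag_nonneg h i

open scoped MatrixOrder in
private lemma trace_mul_psd_nonneg {P Q : Mat d} (hP : P.PosSemidef) (hQ : Q.PosSemidef) :
    0 ≤ (P * Q).trace := by
  set S := CFC.sqrt Q with hSdef
  have hSS : S * S = Q := CFC.sqrt_mul_sqrt_self Q (Matrix.nonneg_iff_posSemidef.mpr hQ)
  have hSh : S.IsHermitian := (Matrix.nonneg_iff_posSemidef.mp (CFC.sqrt_nonneg Q)).1
  have e1 : (P * Q).trace = (S * P * S).trace := by
    rw [← hSS, show P * (S * S) = (P * S) * S by noncomm_ring, Matrix.trace_mul_comm,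
      ← mul_assoc]
  rw [e1]
  have hpsd : (S * P * Sᴴ).PosSemidef := hP.mul_mul_conjTranspose_same S
  rw [hSh] at hpsd
  exact psd_trace_nonneg_s11 hpsd

private lemma exp_posSemidef (X : Mat d) (hX : X.IsSymm) : (exp X).PosSemidef := by
  have hhalf : (1/2 : ℝ) • X + (1/2 : ℝ) • X = X := by
    rw [← add_smul]; norm_num
  set H := exp ((1/2 : ℝ) • X) with hH
  have hW : exp X = H * H := by
    rw [← Matrix.exp_add_of_commute _ _ (Commute.refl _), hhalf]
  have hHh : H.IsHermitian := Matrix.IsSymm.exp (hX.smul _)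
  have := Matrix.posSemidef_conjTranspose_mul_self H
  rw [hHh.eq, ← hW] at this
  exact this

private lemma psd_correction (Bm : Mat d) (hs : Bm.IsSymm) (hle : matrixOpNorm Bm ≤ 1) :
    (1 + Bm + Bm ^ 2 - exp Bm).PosSemidef := by
  have hH : Bm.IsHermitian := hs
  set U : Mat d := (hH.eigenvectorUnitary : Mat d) with hUdef
  have hmem : U ∈ unitary (Mat d) := SetLike.coe_mem _
  have hU2 : star U * U = 1 := (Unitary.mem_iff.mp hmem).1
  have hU1 : U * star U = 1 := (Unitary.mem_iff.mp hmem).2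
  set uU : (Mat d)ˣ := ⟨U, star U, hU1, hU2⟩ with huU
  set μ : Fin d → ℝ := hH.eigenvalues with hμ
  have hspec : Bm = U * diagonal μ * star U := by
    have := hH.spectral_theorem
    rwa [RCLike.ofReal_real_eq_id, Function.id_comp] at this
  have hexp : exp Bm = U * diagonal (fun i => Real.exp (μ i)) * star U := by
    rw [hspec]
    have hconj := Matrix.exp_units_conj uU (diagonal μ)
    have e1 : (uU : Mat d) = U := rfl
    have e2 : ((uU⁻¹ : (Mat d)ˣ) : Mat d) = star U := rfl
    rw [e1, e2] at hconj
    rw [hconj, Matrix.exp_diagonal]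
    congr 2
    rw [Pi.exp_def]
    funext i
    rw [← Real.exp_eq_exp_ℝ]
  have hB2 : Bm ^ 2 = U * diagonal (fun i => μ i * μ i) * star U := by
    rw [hspec, pow_two]
    rw [show U * diagonal μ * star U * (U * diagonal μ * star U)
        = U * diagonal μ * (star U * U) * (diagonal μ * star U) by noncomm_ring, hU2]
    rw [show U * diagonal μ * 1 * (diagonal μ * star U)
        = U * (diagonal μ * diagonal μ) * star U by noncomm_ring, diagonal_mul_diagonal]
  have hone : (1 : Mat d) = U * diagonal (fun _ => (1:ℝ)) * star U := by
    have : diagonal (fun _ : Fin d => (1:ℝ)) = (1 : Mat d) := Matrix.diagonal_one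
    rw [this, mul_one, hU1]
  set f : Fin d → ℝ := fun i => 1 + μ i + μ i * μ i - Real.exp (μ i) with hf
  have hcomb : 1 + Bm + Bm ^ 2 - exp Bm = U * diagonal f * star U := by
    rw [hB2, hexp, hone, hspec]
    rw [show diagonal f = diagonal (fun _ : Fin d => (1:ℝ)) + diagonal μ
        + diagonal (fun i => μ i * μ i) - diagonal (fun i => Real.exp (μ i)) by
      rw [diagonal_add, diagonal_add, diagonal_sub]]
    noncomm_ring
  rw [hcomb]
  have hpsd : (diagonal f).PosSemidef := by
    rw [Matrix.posSemidef_diagonal_iff]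
    intro i
    have h1 : |μ i| ≤ 1 := le_trans (eig_abs_le Bm hH i) hle
    have := exp_le_one_add_sq h1
    simp only [hf]
    linarith
  have := hpsd.mul_mul_conjTranspose_same U
  rwa [← Matrix.star_eq_conjTranspose] at this


/-- **One-step potential increase (Lemma 12).** Let `A_1, …, A_n` be symmetric with
`‖A_i‖_op ≤ 1`, let `ε, δ > 0` with `ε δ n ≤ 1`, set `W = exp(ε ∑ i, c_i A_i)`, and let `y`
satisfy `‖y‖_∞ ≤ 1`, `∑ i, y_i (W • A_i) = 0` and `W • (∑ i, y_i A_i)² ≤ 16 Tr[W]`. Then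
`Tr[exp(ε ∑ i, (c_i + δ y_i) A_i)] ≤ (1 + 16 ε² δ²) Tr[exp(ε ∑ i, c_i A_i)]`. -/
theorem stmt_11 (m n : ℕ) (A : Fin n → Matrix (Fin m) (Fin m) ℝ)
    (hsymm : ∀ i, (A i).IsSymm) (hop : ∀ i, matrixOpNorm (A i) ≤ 1)
    (c : Fin n → ℝ) (ε δ : ℝ) (hε : 0 < ε) (hδ : 0 < δ) (hεδ : ε * δ * n ≤ 1)
    (W : Matrix (Fin m) (Fin m) ℝ)
    (hW : W = NormedSpace.exp (ε • ∑ i, c i • A i))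
    (y : Fin n → ℝ) (hy : ∀ i, |y i| ≤ 1)
    (horth : ∑ i, y i * frob W (A i) = 0)
    (hquad : frob W ((∑ i, y i • A i) ^ 2) ≤ 16 * W.trace) :
    (NormedSpace.exp (ε • ∑ i, (c i + δ * y i) • A i)).trace ≤
      (1 + 16 * ε ^ 2 * δ ^ 2) * (NormedSpace.exp (ε • ∑ i, c i • A i)).trace := by
  classical
  set X : Mat m := ε • ∑ i, c i • A i with hX
  set Y : Mat m := ∑ i, y i • A i with hY
  set Bm : Mat m := (ε * δ) • Y with hBm
  have hsum_symm : ∀ g : Fin n → ℝ, (∑ i, g i • A i).IsSymm := by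
    intro g
    unfold Matrix.IsSymm
    rw [Matrix.transpose_sum]
    apply Finset.sum_congr rfl
    intro i _
    rw [Matrix.transpose_smul, hsymm i]
  have hXs : X.IsSymm := (hsum_symm c).smul ε
  have hYs : Y.IsSymm := hsum_symm y
  have hBs : Bm.IsSymm := hYs.smul _
  have hdecomp : ε • ∑ i, (c i + δ * y i) • A i = X + Bm := by
    rw [hX, hBm, hY]
    have e1 : ∑ i, (c i + δ * y i) • A i
        = (∑ i, c i • A i) + ∑ i, (δ * y i) • A i := by
      rw [← Finset.sum_add_distrib]
      apply Finset.sum_congr rfl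
      intro i _
      rw [add_smul]
    rw [e1, smul_add]
    congr 1
    rw [Finset.smul_sum, Finset.smul_sum]
    apply Finset.sum_congr rfl
    intro i _
    rw [smul_smul, smul_smul]
    congr 1
    ring
  have hopY : matrixOpNorm Y ≤ n := by
    calc matrixOpNorm Y ≤ ∑ i, matrixOpNorm (y i • A i) := matrixOpNorm_sum_le _ _
      _ ≤ ∑ _i : Fin n, (1:ℝ) := by
          apply Finset.sum_le_sum
          intro i _
          rw [matrixOpNorm_smul]
          calc |y i| * matrixOpNorm (A i) ≤ 1 * 1 :=
                mul_le_mul (hy i) (hop i) (matrixOpNorm_nonneg _) zero_le_one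
            _ = 1 := by ring
      _ = n := by simp
  have hopB : matrixOpNorm Bm ≤ 1 := by
    rw [hBm, matrixOpNorm_smul, abs_of_pos (by positivity : (0:ℝ) < ε * δ)]
    calc ε * δ * matrixOpNorm Y ≤ ε * δ * n := by
          apply mul_le_mul_of_nonneg_left hopY (by positivity)
      _ ≤ 1 := hεδ
  have hWpsd : W.PosSemidef := by rw [hW]; exact exp_posSemidef X hXs
  have hcorr := psd_correction Bm hBs hopB
  have hGT := golden_thompson X Bm hXs hBs
  have hmid : (W * exp Bm).trace ≤ (W * (1 + Bm + Bm ^ 2)).trace := by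
    have h0 := trace_mul_psd_nonneg hWpsd hcorr
    have e : W * (1 + Bm + Bm ^ 2) - W * exp Bm = W * (1 + Bm + Bm ^ 2 - exp Bm) := by
      noncomm_ring
    have e2 : (W * (1 + Bm + Bm ^ 2)).trace - (W * exp Bm).trace
        = (W * (1 + Bm + Bm ^ 2 - exp Bm)).trace := by
      rw [← Matrix.trace_sub, e]
    linarith
  have htr1 : (W * Bm).trace = 0 := by
    rw [hBm, hY, mul_smul_comm, Matrix.trace_smul, Finset.mul_sum, Matrix.trace_sum]
    have e : ∀ i, (W * (y i • A i)).trace = y i * frob W (A i) := by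
      intro i
      rw [mul_smul_comm, Matrix.trace_smul, smul_eq_mul, frob_eq_trace_s11, hsymm i]
    rw [Finset.sum_congr rfl (fun i _ => e i), horth, smul_zero]
  have htr2 : (W * Bm ^ 2).trace ≤ (ε * δ) ^ 2 * (16 * W.trace) := by
    rw [hBm, smul_pow, mul_smul_comm, Matrix.trace_smul, smul_eq_mul]
    have e : (W * Y ^ 2).trace = frob W (Y ^ 2) := by
      rw [frob_eq_trace_s11, (hYs.pow 2)]
    rw [e]
    exact mul_le_mul_of_nonneg_left hquad (by positivity)
  have hexpand : (W * (1 + Bm + Bm ^ 2)).trace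
      = W.trace + (W * Bm).trace + (W * Bm ^ 2).trace := by
    rw [mul_add, mul_add, mul_one, Matrix.trace_add, Matrix.trace_add]
  calc (exp (ε • ∑ i, (c i + δ * y i) • A i)).trace = (exp (X + Bm)).trace := by
        rw [hdecomp]
    _ ≤ (exp X * exp Bm).trace := hGT
    _ = (W * exp Bm).trace := by rw [hW]
    _ ≤ (W * (1 + Bm + Bm ^ 2)).trace := hmid
    _ = W.trace + (W * Bm).trace + (W * Bm ^ 2).trace := hexpand
    _ ≤ W.trace + 0 + (ε * δ) ^ 2 * (16 * W.trace) := by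
        rw [htr1]
        linarith
    _ = (1 + 16 * ε ^ 2 * δ ^ 2) * (exp X).trace := by
        rw [← hW]
        ring
end

section
/- Let A, B ∈ ℝ^{m×n} be matrices with |B_{ij}| ≤ |A_{ij}| for all i ∈ {1,…,m} and j ∈ {1,…,n}, let w_1, …, w_m ≥ 0 be nonnegative weights, and let k be a positive integer. Then there exists a linear subspace U ⊆ ℝ^n with dim(U) ≥ (1 − 1/k)·n such that for all y ∈ U one has ∑_{i=1}^m w_i·⟨B_i, y⟩² ≤ k·∑_{i=1}^m w_i·∑_{j=1}^n A_{ij}² y_j², where A_i, B_i denote the i-th rows of A and B. -/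
open Matrix Finset

/-- **Lemma 16.** Let `A, B ∈ ℝ^{m×n}` with `|B_{ij}| ≤ |A_{ij}|` entrywise, let
`w_1, …, w_m ≥ 0` and let `k` be a positive integer. Then there is a subspace `U ⊆ ℝ^n` of
dimension at least `(1 - 1/k) n` such that
`∑ i, w_i ⟨B_i, y⟩² ≤ k ∑ i, w_i ∑ j, A_{ij}² y_j²` for all `y ∈ U`. -/
theorem stmt_12 (m n : ℕ) (A B : Matrix (Fin m) (Fin n) ℝ)
    (hAB : ∀ i j, |B i j| ≤ |A i j|)
    (w : Fin m → ℝ) (hw : ∀ i, 0 ≤ w i)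
    (k : ℕ) (hk : 0 < k) :
    ∃ U : Submodule ℝ (Fin n → ℝ),
      (1 - 1 / (k : ℝ)) * (n : ℝ) ≤ (Module.finrank ℝ U : ℝ) ∧
      ∀ y ∈ U,
        ∑ i, w i * (∑ j, B i j * y j) ^ 2 ≤
          (k : ℝ) * ∑ i, w i * ∑ j, (A i j) ^ 2 * (y j) ^ 2 := by
  classical
  -- the diagonal weights
  set D : Fin n → ℝ := fun j => ∑ i, w i * A i j ^ 2 with hDdef
  have hD0 : ∀ j, 0 ≤ D j := fun j =>
    Finset.sum_nonneg fun i _ => mul_nonneg (hw i) (sq_nonneg _)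
  set g : Fin n → ℝ := fun j => if 0 < D j then (Real.sqrt (D j))⁻¹ else 0 with hgdef
  have hg0 : ∀ j, 0 ≤ g j := by
    intro j
    by_cases h : 0 < D j <;> simp [hgdef, h]
  -- the PSD matrix M
  set M : Matrix (Fin n) (Fin n) ℝ :=
    Matrix.of (fun j l => ∑ i, w i * B i j * B i l) with hMdef
  -- quadratic form of M
  have hquad : ∀ x : Fin n → ℝ,
      x ⬝ᵥ (M *ᵥ x) = ∑ i, w i * (∑ j, B i j * x j) ^ 2 := by
    intro x
    have h1 : x ⬝ᵥ (M *ᵥ x)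
        = ∑ j, ∑ l, ∑ i, x j * (w i * B i j * B i l * x l) := by
      simp [hMdef, dotProduct, mulVec, Finset.mul_sum, Finset.sum_mul]
    have h2 : ∑ i, w i * (∑ j, B i j * x j) ^ 2
        = ∑ i, ∑ j, ∑ l, x j * (w i * B i j * B i l * x l) := by
      refine Finset.sum_congr rfl fun i _ => ?_
      rw [sq, Finset.sum_mul_sum, Finset.mul_sum]
      refine Finset.sum_congr rfl fun j _ => ?_
      rw [Finset.mul_sum]
      exact Finset.sum_congr rfl fun l _ => by ring
    rw [h1, h2]
    rw [show (∑ i : Fin m, ∑ j : Fin n, ∑ l : Fin n, x j * (w i * B i j * B i l * x l))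
        = ∑ j : Fin n, ∑ i : Fin m, ∑ l : Fin n, x j * (w i * B i j * B i l * x l) from
        Finset.sum_comm]
    exact Finset.sum_congr rfl fun j _ => Finset.sum_comm
  -- M is positive semidefinite
  have hMherm : M.IsHermitian := by
    rw [Matrix.IsHermitian, conjTranspose_eq_transpose_of_trivial]
    ext j l
    simp only [transpose_apply, hMdef, Matrix.of_apply]
    exact Finset.sum_congr rfl fun i _ => by ring
  have hMpos : M.PosSemidef := by
    refine Matrix.PosSemidef.of_dotProduct_mulVec_nonneg hMherm fun x => ?_
    rw [star_trivial, hquad]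
    exact Finset.sum_nonneg fun i _ => mul_nonneg (hw i) (sq_nonneg _)
  -- the normalized matrix C
  set C : Matrix (Fin n) (Fin n) ℝ := diagonal g * M * diagonal g with hCdef
  have hCpos : C.PosSemidef := by
    have := hMpos.mul_mul_conjTranspose_same (diagonal g)
    simpa [diagonal_conjTranspose, hCdef] using this
  have hC : C.IsHermitian := hCpos.1
  set μ : Fin n → ℝ := hC.eigenvalues with hmu
  have hμ0 : ∀ i, 0 ≤ μ i := fun i => hCpos.eigenvalues_nonneg i
  -- entries of C
  have hCapp : ∀ j l, C j l = g j * M j l * g l := by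
    intro j l
    rw [hCdef, Matrix.mul_diagonal, Matrix.diagonal_mul]
  -- diagonal comparison
  have hMD : ∀ j, M j j ≤ D j := by
    intro j
    simp only [hMdef, hDdef, Matrix.of_apply]
    refine Finset.sum_le_sum fun i _ => ?_
    have hb : B i j * B i j ≤ A i j ^ 2 := by
      nlinarith [hAB i j, abs_nonneg (B i j), abs_nonneg (A i j), sq_abs (A i j),
        sq_abs (B i j)]
    calc w i * B i j * B i j = w i * (B i j * B i j) := by ring
      _ ≤ w i * A i j ^ 2 := mul_le_mul_of_nonneg_left hb (hw i)
  -- M has nonneg diagonal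
  have hM0 : ∀ j, 0 ≤ M j j := by
    intro j
    simp only [hMdef, Matrix.of_apply]
    refine Finset.sum_nonneg fun i _ => ?_
    have : w i * B i j * B i j = w i * (B i j)^2 := by ring
    rw [this]
    exact mul_nonneg (hw i) (sq_nonneg _)
  -- trace bound
  have htr : Matrix.trace C ≤ (n : ℝ) := by
    rw [Matrix.trace]
    calc ∑ j, C.diag j ≤ ∑ _j : Fin n, (1 : ℝ) := by
          refine Finset.sum_le_sum fun j _ => ?_
          rw [Matrix.diag_apply, hCapp j j]
          by_cases h : 0 < D j
          · have hs : Real.sqrt (D j) ≠ 0 := ne_of_gt (Real.sqrt_pos.mpr h)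
            have hgj : g j = (Real.sqrt (D j))⁻¹ := by rw [hgdef]; simp [h]
            have h1 : g j * M j j * g j ≤ g j * D j * g j :=
              mul_le_mul_of_nonneg_right
                (mul_le_mul_of_nonneg_left (hMD j) (hg0 j)) (hg0 j)
            have h2 : g j * D j * g j = 1 := by
              rw [hgj]
              field_simp
              rw [Real.sq_sqrt (hD0 j)]
            linarith
          · have hgj : g j = 0 := by rw [hgdef]; simp [h]
            simp [hgj]
      _ = (n : ℝ) := by simp
  have htrsum : ∑ i, μ i ≤ (n : ℝ) := by
    have : Matrix.trace C = ∑ i, μ i := by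
      conv_lhs => rw [hC.spectral_theorem, Unitary.conjStarAlgAut_apply]
      rw [Matrix.trace_mul_cycle]
      rw [show (star (hC.eigenvectorUnitary : Matrix (Fin n) (Fin n) ℝ))
        * (hC.eigenvectorUnitary : Matrix (Fin n) (Fin n) ℝ) = 1 from
        Matrix.mem_unitaryGroup_iff'.mp hC.eigenvectorUnitary.2, one_mul]
      simp [Matrix.trace, Matrix.diag, hmu]
    linarith [this ▸ htr]
  -- the bad set
  set bad : Finset (Fin n) := Finset.univ.filter (fun i => (k : ℝ) < μ i) with hbad
  have hcard : (k : ℝ) * bad.card ≤ (n : ℝ) := by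
    have h1 : (k : ℝ) * bad.card = ∑ _i ∈ bad, (k : ℝ) := by
      rw [Finset.sum_const, nsmul_eq_mul, mul_comm]
    have h2 : ∑ _i ∈ bad, (k : ℝ) ≤ ∑ i ∈ bad, μ i :=
      Finset.sum_le_sum fun i hi => le_of_lt (by
        rw [hbad] at hi; exact (Finset.mem_filter.mp hi).2)
    have h3 : ∑ i ∈ bad, μ i ≤ ∑ i, μ i :=
      Finset.sum_le_sum_of_subset_of_nonneg (Finset.subset_univ _)
        (fun i _ _ => hμ0 i)
    linarith
  -- the eigenvector unitary
  set U0 : Matrix (Fin n) (Fin n) ℝ := (hC.eigenvectorUnitary : Matrix (Fin n) (Fin n) ℝ)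
    with hU0
  -- the scaling map
  set L : (Fin n → ℝ) →ₗ[ℝ] (Fin n → ℝ) :=
    { toFun := fun y j => Real.sqrt (D j) * y j
      map_add' := fun y z => by funext j; simp [mul_add]
      map_smul' := fun t y => by funext j; simp [smul_eq_mul]; ring } with hL
  -- the linear map cutting out the subspace
  set Φ : (Fin n → ℝ) →ₗ[ℝ] ({x // x ∈ bad} → ℝ) :=
    LinearMap.pi (fun i : {x // x ∈ bad} =>
      (LinearMap.proj (i : Fin n)).comp ((Matrix.mulVecLin (star U0)).comp L)) with hPhi
  refine ⟨LinearMap.ker Φ, ?_, ?_⟩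
  · -- dimension bound
    have hrn := LinearMap.finrank_range_add_finrank_ker Φ
    have hdom : Module.finrank ℝ (Fin n → ℝ) = n := by
      simp [Module.finrank_pi]
    have hrange : Module.finrank ℝ (LinearMap.range Φ) ≤ bad.card := by
      refine le_trans (Submodule.finrank_le _) ?_
      simp [Module.finrank_pi]
    have hkpos : (0 : ℝ) < k := by exact_mod_cast hk
    have heq : (Module.finrank ℝ (LinearMap.range Φ) : ℝ)
        + (Module.finrank ℝ (LinearMap.ker Φ) : ℝ) = (n : ℝ) := by
      rw [hdom] at hrn
      exact_mod_cast hrn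
    have hrangeR : (Module.finrank ℝ (LinearMap.range Φ) : ℝ) ≤ (bad.card : ℝ) := by
      exact_mod_cast hrange
    have h4 : (bad.card : ℝ) ≤ (n : ℝ) / k := by
      rw [le_div_iff₀ hkpos]
      linarith
    have h5 : (1 - 1 / (k : ℝ)) * n = n - n / k := by ring
    rw [h5]
    have h6 : (n : ℝ) - (bad.card : ℝ) ≤ (Module.finrank ℝ (LinearMap.ker Φ) : ℝ) := by
      linarith
    linarith
  · -- the quadratic form bound
    intro y hy
    set z : Fin n → ℝ := L y with hz
    have hzj : ∀ j, z j = Real.sqrt (D j) * y j := fun j => rfl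
    set c : Fin n → ℝ := star U0 *ᵥ z with hc
    have h0 : ∀ i ∈ bad, c i = 0 := by
      intro i hi
      have := LinearMap.mem_ker.mp hy
      exact congrFun this ⟨i, hi⟩
    -- M vanishes on zero rows of D
    have hwB : ∀ j, ¬ 0 < D j → ∀ i : Fin m, w i * B i j = 0 := by
      intro j h i
      have hDj : D j = 0 := le_antisymm (not_lt.mp h) (hD0 j)
      have hterm : ∀ i ∈ Finset.univ, w i * A i j ^ 2 = 0 := by
        rw [← Finset.sum_eq_zero_iff_of_nonneg
          (fun i _ => mul_nonneg (hw i) (sq_nonneg (A i j)))]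
        exact hDj
      have h1 : w i * B i j ^ 2 = 0 := by
        have h2 : w i * B i j ^ 2 ≤ w i * A i j ^ 2 := by
          refine mul_le_mul_of_nonneg_left ?_ (hw i)
          nlinarith [hAB i j, abs_nonneg (B i j), abs_nonneg (A i j), sq_abs (A i j),
            sq_abs (B i j)]
        have h3 : 0 ≤ w i * B i j ^ 2 := mul_nonneg (hw i) (sq_nonneg _)
        have := hterm i (Finset.mem_univ i)
        linarith
      by_cases hB : B i j = 0
      · simp [hB]
      · have : w i = 0 := by
          rcases mul_eq_zero.mp h1 with h | h
          · exact h
          · exact absurd h (pow_ne_zero 2 hB)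
        simp [this]
    have hMzeroL : ∀ j l, ¬ 0 < D j → M j l = 0 := by
      intro j l h
      simp only [hMdef, Matrix.of_apply]
      refine Finset.sum_eq_zero fun i _ => ?_
      rw [hwB j h i, zero_mul]
    have hMzeroR : ∀ j l, ¬ 0 < D l → M j l = 0 := by
      intro j l h
      simp only [hMdef, Matrix.of_apply]
      refine Finset.sum_eq_zero fun i _ => ?_
      have := hwB l h i
      calc w i * B i j * B i l = (w i * B i l) * B i j := by ring
        _ = 0 := by rw [this, zero_mul]
    -- the two quadratic forms agree
    have hyz : y ⬝ᵥ (M *ᵥ y) = z ⬝ᵥ (C *ᵥ z) := by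
      simp only [dotProduct, mulVec, Finset.mul_sum]
      refine Finset.sum_congr rfl fun j _ => Finset.sum_congr rfl fun l _ => ?_
      rw [hCapp j l, hzj j, hzj l]
      by_cases hj : 0 < D j
      · by_cases hl : 0 < D l
        · have hsj : Real.sqrt (D j) ≠ 0 := ne_of_gt (Real.sqrt_pos.mpr hj)
          have hsl : Real.sqrt (D l) ≠ 0 := ne_of_gt (Real.sqrt_pos.mpr hl)
          have hgj : g j = (Real.sqrt (D j))⁻¹ := by rw [hgdef]; simp [hj]
          have hgl : g l = (Real.sqrt (D l))⁻¹ := by rw [hgdef]; simp [hl]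
          rw [hgj, hgl]
          field_simp
        · rw [hMzeroR j l hl]; ring
      · rw [hMzeroL j l hj]; ring
    -- spectral decomposition of the quadratic form of C
    have hspec : z ⬝ᵥ (C *ᵥ z) = ∑ i, μ i * (c i) ^ 2 := by
      conv_lhs => rw [hC.spectral_theorem, Unitary.conjStarAlgAut_apply]
      rw [← mulVec_mulVec, ← mulVec_mulVec, Matrix.dotProduct_mulVec z U0]
      have hvm : z ᵥ* U0 = star U0 *ᵥ z := by
        rw [Matrix.star_eq_conjTranspose, conjTranspose_eq_transpose_of_trivial,
          Matrix.mulVec_transpose]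
      rw [hvm, ← hc]
      simp [dotProduct, mulVec_diagonal, sq, ← hc]
      exact Finset.sum_congr rfl fun i _ => by ring
    -- the norm is preserved
    have hnorm : c ⬝ᵥ c = z ⬝ᵥ z := by
      have h1 : U0 * star U0 = 1 := Matrix.mem_unitaryGroup_iff.mp hC.eigenvectorUnitary.2
      have hts : (star U0)ᵀ = U0 := by
        rw [Matrix.star_eq_conjTranspose, conjTranspose_eq_transpose_of_trivial,
          Matrix.transpose_transpose]
      calc c ⬝ᵥ c = (z ᵥ* (star U0)ᵀ) ⬝ᵥ c := by
            rw [hc, ← Matrix.mulVec_transpose, Matrix.transpose_transpose]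
        _ = z ⬝ᵥ ((star U0)ᵀ *ᵥ c) := (Matrix.dotProduct_mulVec _ _ _).symm
        _ = z ⬝ᵥ z := by rw [hts, hc, mulVec_mulVec, h1, one_mulVec]
    -- eigenvalue bound on the kernel
    have hbound : ∑ i, μ i * (c i) ^ 2 ≤ (k : ℝ) * (c ⬝ᵥ c) := by
      have : (k : ℝ) * (c ⬝ᵥ c) = ∑ i, (k : ℝ) * (c i) ^ 2 := by
        rw [dotProduct, Finset.mul_sum]
        exact Finset.sum_congr rfl fun i _ => by ring
      rw [this]
      refine Finset.sum_le_sum fun i _ => ?_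
      by_cases hi : i ∈ bad
      · rw [h0 i hi]
        simp
      · have : ¬ ((k : ℝ) < μ i) := by
          intro h
          exact hi (by rw [hbad]; exact Finset.mem_filter.mpr ⟨Finset.mem_univ i, h⟩)
        exact mul_le_mul_of_nonneg_right (not_lt.mp this) (sq_nonneg _)
    -- translate back
    have hzz : z ⬝ᵥ z = ∑ j, D j * y j ^ 2 := by
      rw [dotProduct]
      refine Finset.sum_congr rfl fun j _ => ?_
      rw [hzj j, show (Real.sqrt (D j) * y j) * (Real.sqrt (D j) * y j)
        = (Real.sqrt (D j) * Real.sqrt (D j)) * y j ^ 2 from by ring,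
        Real.mul_self_sqrt (hD0 j)]
    have hswap : ∑ j, D j * y j ^ 2 = ∑ i, w i * ∑ j, A i j ^ 2 * y j ^ 2 := by
      simp only [hDdef, Finset.sum_mul, Finset.mul_sum]
      rw [Finset.sum_comm]
      exact Finset.sum_congr rfl fun i _ => Finset.sum_congr rfl fun j _ => by ring
    calc ∑ i, w i * (∑ j, B i j * y j) ^ 2 = y ⬝ᵥ (M *ᵥ y) := (hquad y).symm
      _ = z ⬝ᵥ (C *ᵥ z) := hyz
      _ = ∑ i, μ i * (c i) ^ 2 := hspec
      _ ≤ (k : ℝ) * (c ⬝ᵥ c) := hbound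
      _ = (k : ℝ) * (z ⬝ᵥ z) := by rw [hnorm]
      _ = (k : ℝ) * ∑ j, D j * y j ^ 2 := by rw [hzz]
      _ = (k : ℝ) * ∑ i, w i * ∑ j, A i j ^ 2 * y j ^ 2 := by rw [hswap]
end

section
/- Let γ > 0, let A ∈ ℝ^{m×n} be a matrix with |A_{ij}| ≤ γ for all entries, let x ∈ [-1,1]^n, let w_1, …, w_m ≥ 0 be nonnegative weights, and let k be a positive integer. Then there exists a linear subspace U ⊆ ℝ^n with dim(U) ≥ (1 − 1/k)·n such that for all y ∈ U one has ∑_{i=1}^m w_i·⟨A_i^{∘2} ∘ x, y⟩² ≤ k·γ²·∑_{i=1}^m w_i·∑_{j=1}^n A_{ij}² y_j². -/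
open Finset
open scoped InnerProductSpace

/-- **Lemma 17.** Let `γ > 0`, let `A ∈ ℝ^{m×n}` with `|A_{ij}| ≤ γ` for all entries, let
`x ∈ [-1,1]^n`, let `w_1, …, w_m ≥ 0` and let `k` be a positive integer. Then there is a
subspace `U ⊆ ℝ^n` of dimension at least `(1 - 1/k) n` such that
`∑ i, w_i ⟨A_i^{∘2} ∘ x, y⟩² ≤ k γ² ∑ i, w_i ∑ j, A_{ij}² y_j²` for all `y ∈ U`,
where `(A_i^{∘2} ∘ x)_j = A_{ij}² x_j`. -/
theorem stmt_13 (m n : ℕ) (γ : ℝ) (hγ : 0 < γ)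
    (A : Matrix (Fin m) (Fin n) ℝ) (hA : ∀ i j, |A i j| ≤ γ)
    (x : Fin n → ℝ) (hx : ∀ j, x j ∈ Set.Icc (-1 : ℝ) 1)
    (w : Fin m → ℝ) (hw : ∀ i, 0 ≤ w i)
    (k : ℕ) (hk : 0 < k) :
    ∃ U : Submodule ℝ (Fin n → ℝ),
      (1 - 1 / (k : ℝ)) * (n : ℝ) ≤ (Module.finrank ℝ U : ℝ) ∧
      ∀ y ∈ U,
        ∑ i, w i * (∑ j, (A i j) ^ 2 * x j * y j) ^ 2 ≤
          (k : ℝ) * γ ^ 2 * ∑ i, w i * ∑ j, (A i j) ^ 2 * (y j) ^ 2 := by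
  classical
  have hγ2 : (0:ℝ) < γ ^ 2 := by positivity
  have hA2 : ∀ i j, A i j ^ 2 ≤ γ ^ 2 := by
    intro i j
    have h := hA i j
    nlinarith [abs_nonneg (A i j), sq_abs (A i j)]
  have hx2 : ∀ j, x j ^ 2 ≤ 1 := by
    intro j
    obtain ⟨h1, h2⟩ := hx j
    nlinarith
  set D : Fin n → ℝ := fun j => ∑ i, w i * A i j ^ 2 with hDdef
  have hD0 : ∀ j, 0 ≤ D j := fun j =>
    Finset.sum_nonneg fun i _ => mul_nonneg (hw i) (sq_nonneg _)
  have hDz : ∀ j, D j = 0 → ∀ i, w i * A i j ^ 2 = 0 := by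
    intro j hj i
    exact (Finset.sum_eq_zero_iff_of_nonneg
      (fun i _ => mul_nonneg (hw i) (sq_nonneg (A i j)))).mp hj i (mem_univ i)
  set s : Fin n → ℝ := fun j => Real.sqrt (D j) with hsdef
  have hs2 : ∀ j, s j ^ 2 = D j := fun j => Real.sq_sqrt (hD0 j)
  have hsne : ∀ j, D j ≠ 0 → s j ≠ 0 := by
    intro j hj hs0
    exact hj (by rw [← hs2 j, hs0]; ring)
  -- normalized vectors
  set u : Fin m → EuclideanSpace ℝ (Fin n) :=
    fun i => WithLp.toLp 2 (fun j => if D j = 0 then 0 else A i j ^ 2 * x j / s j) with hudef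
  have huapp : ∀ i j, u i j = if D j = 0 then 0 else A i j ^ 2 * x j / s j := fun i j => rfl
  -- the symmetric operator
  set T : EuclideanSpace ℝ (Fin n) →ₗ[ℝ] EuclideanSpace ℝ (Fin n) :=
    { toFun := fun z => ∑ i, (w i * ⟪u i, z⟫_ℝ) • u i
      map_add' := by
        intro z z'
        simp [inner_add_right, mul_add, add_smul, Finset.sum_add_distrib]
      map_smul' := by
        intro c z
        rw [Finset.smul_sum]
        simp only [real_inner_smul_right, RingHom.id_apply]
        refine Finset.sum_congr rfl fun i _ => ?_
        rw [smul_smul]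
        ring_nf } with hTdef
  have hTinner : ∀ z z', ⟪z', T z⟫_ℝ = ∑ i, w i * (⟪u i, z'⟫_ℝ * ⟪u i, z⟫_ℝ) := by
    intro z z'
    show ⟪z', ∑ i, (w i * ⟪u i, z⟫_ℝ) • u i⟫_ℝ = _
    rw [inner_sum]
    refine Finset.sum_congr rfl fun i _ => ?_
    rw [real_inner_smul_right, real_inner_comm z' (u i)]
    ring
  have hsym : T.IsSymmetric := by
    intro z z'
    rw [real_inner_comm, hTinner, hTinner]
    exact Finset.sum_congr rfl fun i _ => by ring
  have hn : Module.finrank ℝ (EuclideanSpace ℝ (Fin n)) = n := finrank_euclideanSpace_fin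
  set b := hsym.eigenvectorBasis hn with hbdef
  set μ := hsym.eigenvalues hn with hμdef
  have hbb : ∀ l, ⟪b l, b l⟫_ℝ = 1 := by
    intro l
    rw [real_inner_self_eq_norm_sq, b.orthonormal.1 l]
    norm_num
  have hμeq : ∀ l, μ l = ∑ i, w i * ⟪u i, b l⟫_ℝ ^ 2 := by
    intro l
    have h1 : ⟪b l, T (b l)⟫_ℝ = μ l := by
      rw [hsym.apply_eigenvectorBasis, real_inner_smul_right, hbb l, mul_one]
      rfl
    rw [← h1, hTinner]
    exact Finset.sum_congr rfl fun i _ => by ring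
  have hμ0 : ∀ l, 0 ≤ μ l := by
    intro l
    rw [hμeq l]
    exact Finset.sum_nonneg fun i _ => mul_nonneg (hw i) (sq_nonneg _)
  -- trace bound
  have htrace : ∑ l, μ l ≤ (n : ℝ) * γ ^ 2 := by
    have h1 : ∑ l, μ l = ∑ i, w i * ⟪u i, u i⟫_ℝ := by
      simp_rw [hμeq]
      rw [Finset.sum_comm]
      refine Finset.sum_congr rfl fun i _ => ?_
      rw [← Finset.mul_sum]
      congr 1
      rw [← b.sum_inner_mul_inner (u i) (u i)]
      exact Finset.sum_congr rfl fun l _ => by rw [real_inner_comm (b l) (u i)]; ring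
    rw [h1]
    have h2 : ∀ i, ⟪u i, u i⟫_ℝ = ∑ j, u i j ^ 2 := by
      intro i
      rw [PiLp.inner_apply]
      exact Finset.sum_congr rfl fun j _ => by simp [sq]
    calc ∑ i, w i * ⟪u i, u i⟫_ℝ = ∑ j, ∑ i, w i * u i j ^ 2 := by
          simp_rw [h2, Finset.mul_sum]
          exact Finset.sum_comm
      _ ≤ ∑ _j : Fin n, γ ^ 2 := by
          refine Finset.sum_le_sum fun j _ => ?_
          by_cases hDj : D j = 0
          · simp [huapp, hDj]
            positivity
          · have hDpos : 0 < D j := lt_of_le_of_ne (hD0 j) (Ne.symm hDj)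
            have : ∀ i, w i * u i j ^ 2 = w i * (A i j ^ 4 * x j ^ 2) / D j := by
              intro i
              rw [huapp, if_neg hDj, div_pow, hs2]
              ring
            simp_rw [this]
            rw [← Finset.sum_div, div_le_iff₀ hDpos]
            have hbound : ∀ i, w i * (A i j ^ 4 * x j ^ 2) ≤ γ ^ 2 * (w i * A i j ^ 2) := by
              intro i
              have h3 := hA2 i j
              have h4 := hx2 j
              have h5 := hw i
              have e1 : A i j ^ 2 * x j ^ 2 ≤ γ ^ 2 := by
                nlinarith [sq_nonneg (A i j), sq_nonneg (x j)]
              calc w i * (A i j ^ 4 * x j ^ 2)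
                  = (w i * A i j ^ 2) * (A i j ^ 2 * x j ^ 2) := by ring
                _ ≤ (w i * A i j ^ 2) * γ ^ 2 :=
                    mul_le_mul_of_nonneg_left e1 (mul_nonneg h5 (sq_nonneg _))
                _ = γ ^ 2 * (w i * A i j ^ 2) := by ring
            calc ∑ i, w i * (A i j ^ 4 * x j ^ 2) ≤ ∑ i, γ ^ 2 * (w i * A i j ^ 2) :=
                  Finset.sum_le_sum fun i _ => hbound i
              _ = γ ^ 2 * D j := by rw [← Finset.mul_sum]
      _ = (n : ℝ) * γ ^ 2 := by simp [mul_comm]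
  -- bad eigenvalues
  set Bad : Finset (Fin n) := univ.filter (fun l => (k : ℝ) * γ ^ 2 < μ l) with hBdef
  have hk0 : (0:ℝ) < (k : ℝ) := by exact_mod_cast hk
  have hcard : (Bad.card : ℝ) ≤ (n : ℝ) / (k : ℝ) := by
    have h1 : (Bad.card : ℝ) * ((k : ℝ) * γ ^ 2) ≤ ∑ l ∈ Bad, μ l := by
      have := Finset.card_nsmul_le_sum Bad μ ((k : ℝ) * γ ^ 2)
        (fun l hl => le_of_lt (by simpa [hBdef] using (mem_filter.mp hl).2))
      simpa [nsmul_eq_mul] using this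
    have h2 : ∑ l ∈ Bad, μ l ≤ ∑ l, μ l :=
      Finset.sum_le_sum_of_subset_of_nonneg (subset_univ _) fun l _ _ => hμ0 l
    rw [le_div_iff₀ hk0]
    nlinarith
  -- the diagonal scaling map and the subspace
  set zmap : (Fin n → ℝ) →ₗ[ℝ] EuclideanSpace ℝ (Fin n) :=
    (WithLp.linearEquiv 2 ℝ (Fin n → ℝ)).symm.toLinearMap.comp
      (LinearMap.pi (fun j => s j • LinearMap.proj j)) with hzdef
  have hzapp : ∀ (y : Fin n → ℝ) (j : Fin n), zmap y j = s j * y j := fun y j => rfl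
  set L : (Fin n → ℝ) →ₗ[ℝ] ({l // l ∈ Bad} → ℝ) :=
    LinearMap.pi (fun l => ((innerSL ℝ (b l.1)).toLinearMap).comp zmap) with hLdef
  refine ⟨LinearMap.ker L, ?_, ?_⟩
  · -- dimension bound
    have hrank := LinearMap.finrank_range_add_finrank_ker L
    have h1 : Module.finrank ℝ (Fin n → ℝ) = n := by simp
    have h2 : Module.finrank ℝ (LinearMap.range L) ≤ Bad.card :=
      le_trans (Submodule.finrank_le _) (by simp [Fintype.card_coe])
    rw [h1] at hrank
    have h3 : (n : ℝ) ≤ (Bad.card : ℝ) + (Module.finrank ℝ (LinearMap.ker L) : ℝ) := by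
      have := congrArg (fun t : ℕ => (t : ℝ)) hrank
      push_cast at this
      have h2' : (Module.finrank ℝ (LinearMap.range L) : ℝ) ≤ (Bad.card : ℝ) := by
        exact_mod_cast h2
      linarith
    have h4 : (1 - 1 / (k : ℝ)) * (n : ℝ) ≤ (n : ℝ) - (n : ℝ) / (k : ℝ) := by
      rw [sub_mul, one_mul, div_mul_eq_mul_div, mul_comm]
      gcongr <;> norm_num
    linarith
  · -- main inequality
    intro y hy
    set z := zmap y with hz
    have hbz : ∀ l, l ∈ Bad → ⟪b l, z⟫_ℝ = 0 := by
      intro l hl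
      have h0 : L y = 0 := LinearMap.mem_ker.mp hy
      have := congrFun h0 ⟨l, hl⟩
      simpa [hLdef] using this
    have hinnerz : ∀ v : EuclideanSpace ℝ (Fin n), ⟪v, z⟫_ℝ = ∑ j, v j * (s j * y j) := by
      intro v
      rw [PiLp.inner_apply]
      refine Finset.sum_congr rfl fun j _ => ?_
      simp only [RCLike.inner_apply, conj_trivial]
      exact mul_comm _ _
    have huz : ∀ i, w i * (∑ j, A i j ^ 2 * x j * y j) ^ 2 = w i * ⟪u i, z⟫_ℝ ^ 2 := by
      intro i
      rcases eq_or_lt_of_le (hw i) with h0 | hpos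
      · rw [← h0, zero_mul, zero_mul]
      · congr 2
        rw [hinnerz (u i)]
        refine (Finset.sum_congr rfl fun j _ => ?_).symm
        rw [huapp]
        by_cases hDj : D j = 0
        · rw [if_pos hDj, zero_mul]
          have hwA : w i * A i j ^ 2 = 0 := hDz j hDj i
          have hA0 : A i j = 0 := by
            have hsq : A i j ^ 2 = 0 := by
              rcases mul_eq_zero.mp hwA with h | h
              · exact absurd h (ne_of_gt hpos)
              · exact h
            exact pow_eq_zero_iff (two_ne_zero) |>.mp hsq
          rw [hA0]
          ring
        · rw [if_neg hDj]
          field_simp [hsne j hDj]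
    have hQ : ∑ i, w i * (∑ j, A i j ^ 2 * x j * y j) ^ 2
        = ∑ l, μ l * ⟪b l, z⟫_ℝ ^ 2 := by
      calc ∑ i, w i * (∑ j, A i j ^ 2 * x j * y j) ^ 2
          = ∑ i, w i * ⟪u i, z⟫_ℝ ^ 2 := Finset.sum_congr rfl fun i _ => huz i
        _ = ⟪z, T z⟫_ℝ := by
            rw [hTinner]
            refine Finset.sum_congr rfl fun i _ => ?_
            ring
        _ = ∑ l, ⟪z, b l⟫_ℝ * ⟪b l, T z⟫_ℝ := (b.sum_inner_mul_inner z (T z)).symm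
        _ = ∑ l, μ l * ⟪b l, z⟫_ℝ ^ 2 := by
            refine Finset.sum_congr rfl fun l _ => ?_
            rw [← hsym (b l) z, hsym.apply_eigenvectorBasis, real_inner_smul_left,
              real_inner_comm z (b l)]
            rw [hμdef]
            simp only [RCLike.ofReal_real_eq_id, id_eq]
            ring
    have hR : ∑ i, w i * ∑ j, A i j ^ 2 * y j ^ 2 = ∑ l, ⟪b l, z⟫_ℝ ^ 2 := by
      calc ∑ i, w i * ∑ j, A i j ^ 2 * y j ^ 2
          = ∑ j, D j * y j ^ 2 := by
            simp_rw [Finset.mul_sum]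
            rw [Finset.sum_comm]
            refine Finset.sum_congr rfl fun j _ => ?_
            rw [hDdef, Finset.sum_mul]
            exact Finset.sum_congr rfl fun i _ => by ring
        _ = ⟪z, z⟫_ℝ := by
            rw [hinnerz z]
            refine (Finset.sum_congr rfl fun j _ => ?_).symm
            rw [show z j = s j * y j from rfl, ← hs2 j]
            ring
        _ = ∑ l, ⟪z, b l⟫_ℝ * ⟪b l, z⟫_ℝ := (b.sum_inner_mul_inner z z).symm
        _ = ∑ l, ⟪b l, z⟫_ℝ ^ 2 := by
            refine Finset.sum_congr rfl fun l _ => ?_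
            rw [real_inner_comm z (b l)]; ring
    rw [hQ, hR, Finset.mul_sum]
    refine Finset.sum_le_sum fun l _ => ?_
    by_cases hl : l ∈ Bad
    · rw [hbz l hl]
      simp
    · have : μ l ≤ (k : ℝ) * γ ^ 2 := by
        by_contra hlt
        exact hl (mem_filter.mpr ⟨mem_univ l, lt_of_not_ge hlt⟩)
      exact mul_le_mul_of_nonneg_right this (sq_nonneg _)
end
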